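/- arXiv:1303.1964 — 2 statements merged into one kernel-verified Lean document; each statement's English description precedes it below -/
import Mathlib

section
/- Transport integration-by-parts identity (identity (transport_identity) in the proof of Theorem 2.4): Let β̄ ∈ C¹(Ω̄; ℝ^d) with β̄·n = 0 on ∂Ω and u ∈ C²(Ω̄) with u = 0 on ∂Ω. Then −∫_Ω (β̄·∇u) Δu dx = ∫_Ω (∇_S β̄ ∇u)·∇u dx − ½ ∫_Ω (∇·β̄) |∇u|² dx, where ∇_S β̄ := ½(Dβ̄ + Dβ̄ᵀ) is the symmetric part of the Jacobian matrix Dβ̄ of β̄. -/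
open MeasureTheory Set
open scoped RealInnerProductSpace NNReal

noncomputable section

abbrev Euc (d : ℕ) := EuclideanSpace ℝ (Fin d)

/-- Divergence of a vector field. -/
noncomputable def divg {d : ℕ} (F : Euc d → Euc d) (x : Euc d) : ℝ :=
  ∑ i, fderiv ℝ (fun y => F y i) x (EuclideanSpace.single i 1)

/-- Laplacian of a scalar field. -/
noncomputable def lapl {d : ℕ} (g : Euc d → ℝ) (x : Euc d) : ℝ :=
  ∑ i, fderiv ℝ (fun y => fderiv ℝ g y (EuclideanSpace.single i 1)) x (EuclideanSpace.single i 1)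

/-- Action of the symmetric part ∇_S β̄ = ½(Dβ̄ + Dβ̄ᵀ) of the Jacobian of `βb` at `x` on `v`. -/
noncomputable def symGradApp {d : ℕ} (βb : Euc d → Euc d) (x v : Euc d) : Euc d :=
  (1 / 2 : ℝ) • (fderiv ℝ βb x v + ContinuousLinearMap.adjoint (fderiv ℝ βb x) v)

namespace TIBP


variable {d : ℕ}

/-- basis vector -/
def e (d : ℕ) (i : Fin d) : Euc d := EuclideanSpace.single i (1 : ℝ)

lemma e_apply (i j : Fin d) : e d i j = if j = i then (1:ℝ) else 0 := by
  simp [e, EuclideanSpace.single_apply]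

lemma inner_eq_sum (x y : Euc d) : ⟪x, y⟫ = ∑ i, x i * y i := by
  simp [PiLp.inner_apply, RCLike.inner_apply]
  exact Finset.sum_congr rfl (fun _ _ => mul_comm _ _)

lemma coord_fderiv {F : Euc d → Euc d} {x : Euc d} (hF : DifferentiableAt ℝ F x)
    (i : Fin d) (v : Euc d) :
    fderiv ℝ (fun y => F y i) x v = (fderiv ℝ F x v) i := by
  have h : HasFDerivAt (fun y => (EuclideanSpace.proj i : Euc d →L[ℝ] ℝ) (F y))
      ((EuclideanSpace.proj (𝕜 := ℝ) i).comp (fderiv ℝ F x)) x :=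
    (EuclideanSpace.proj (𝕜 := ℝ) i).hasFDerivAt.comp x hF.hasFDerivAt
  have : fderiv ℝ (fun y => F y i) x = (EuclideanSpace.proj (𝕜 := ℝ) i).comp (fderiv ℝ F x) :=
    h.fderiv
  rw [this]; rfl

lemma decomp (v : Euc d) : ∑ i, v i • e d i = v := by
  ext j
  rw [WithLp.ofLp_sum, Finset.sum_apply]
  simp only [PiLp.smul_apply, e_apply, smul_eq_mul, mul_ite, mul_one, mul_zero]
  simp

lemma clm_sum_coords {X : Type*} [NormedAddCommGroup X] [NormedSpace ℝ X]
    (T : Euc d →L[ℝ] X) (v : Euc d) : T v = ∑ i, v i • T (e d i) := by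
  conv_lhs => rw [← decomp v]
  rw [map_sum]
  simp [T.map_smul]

lemma grad_apply (u : Euc d → ℝ) (x : Euc d) (i : Fin d) :
    gradient u x i = fderiv ℝ u x (e d i) := by
  have h1 : gradient u x i = ⟪gradient u x, e d i⟫ := by
    rw [inner_eq_sum]
    simp only [e_apply, mul_ite, mul_one, mul_zero]
    simp
  rw [h1, gradient]
  exact InnerProductSpace.toDual_symm_apply



-- gradient as a function is C^1 when u is C^2
lemma contDiff_gradient {u : Euc d → ℝ} (hu : ContDiff ℝ 2 u) :
    ContDiff ℝ 1 (fun x => gradient u x) := by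
  have h1 : ContDiff ℝ 1 (fderiv ℝ u) := hu.fderiv_right (by norm_num)
  have h2 := (InnerProductSpace.toDual ℝ (Euc d)).symm.contDiff (𝕜 := ℝ) (n := (1:WithTop ℕ∞))
  exact h2.comp h1

-- differentiability/continuity of x ↦ fderiv f x v
lemma contDiff_fderiv_apply {f : Euc d → ℝ} (hf : ContDiff ℝ 2 f) (v : Euc d) :
    ContDiff ℝ 1 (fun x => fderiv ℝ f x v) :=
  (hf.fderiv_right (by norm_num : (1:WithTop ℕ∞) + 1 ≤ 2)).clm_apply contDiff_const

lemma cont_fderiv_apply_of_contDiff_one {f : Euc d → ℝ} (hf : ContDiff ℝ 1 f) (v : Euc d) :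
    Continuous (fun x => fderiv ℝ f x v) := by
  have := hf.continuous_fderiv one_ne_zero
  exact (ContinuousLinearMap.apply ℝ ℝ v).continuous.comp this

-- integrability of continuous functions on bounded Ω
lemma cont_integrableOn {Ω : Set (Euc d)} (hΩb : Bornology.IsBounded Ω)
    {f : Euc d → ℝ} (hf : Continuous f) : IntegrableOn f Ω volume := by
  have hK : IsCompact (closure Ω) := hΩb.isCompact_closure
  exact (hf.continuousOn.integrableOn_compact hK).mono_set subset_closure

lemma vol_lt_top {Ω : Set (Euc d)} (hΩb : Bornology.IsBounded Ω) : volume Ω < ⊤ :=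
  lt_of_le_of_lt (measure_mono subset_closure) hΩb.isCompact_closure.measure_lt_top


-- pointwise divergence formulas
lemma divg_eq {F : Euc d → Euc d} {x : Euc d} (hF : DifferentiableAt ℝ F x) :
    divg F x = ∑ i, (fderiv ℝ F x (e d i)) i := by
  unfold divg
  refine Finset.sum_congr rfl fun i _ => ?_
  rw [show EuclideanSpace.single i (1:ℝ) = e d i from rfl, coord_fderiv hF]

lemma grad_fun_eq (u : Euc d → ℝ) (i : Fin d) :
    (fun y => gradient u y i) = fun y => fderiv ℝ u y (e d i) := by
  funext y; exact grad_apply u y i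

lemma lapl_eq {u : Euc d → ℝ} {x : Euc d} (hu : DifferentiableAt ℝ (fun y => gradient u y) x) :
    lapl u x = ∑ i, (fderiv ℝ (fun y => gradient u y) x (e d i)) i := by
  unfold lapl
  refine Finset.sum_congr rfl fun i _ => ?_
  have h1 : (fun y => fderiv ℝ u y (EuclideanSpace.single i (1:ℝ)))
      = fun y => gradient u y i := (grad_fun_eq u i).symm
  rw [h1, show EuclideanSpace.single i (1:ℝ) = e d i from rfl, coord_fderiv hu]

lemma diff_coord {F : Euc d → Euc d} {x : Euc d} (hF : DifferentiableAt ℝ F x) (i : Fin d) :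
    DifferentiableAt ℝ (fun y => F y i) x :=
  (EuclideanSpace.proj (𝕜 := ℝ) i).differentiableAt.comp x hF

lemma smul_coord (r : ℝ) (v : Euc d) (i : Fin d) : (r • v) i = r * v i := rfl

lemma divg_smul {h : Euc d → ℝ} {V : Euc d → Euc d} {x : Euc d}
    (hh : DifferentiableAt ℝ h x) (hV : DifferentiableAt ℝ V x) :
    divg (fun y => h y • V y) x
      = (∑ i, fderiv ℝ h x (e d i) * V x i) + h x * divg V x := by
  unfold divg
  rw [Finset.mul_sum, ← Finset.sum_add_distrib]
  refine Finset.sum_congr rfl fun i _ => ?_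
  have h1 : (fun y => (h y • V y) i) = fun y => h y * V y i := rfl
  rw [h1, fderiv_fun_mul hh (diff_coord hV i)]
  have h2 : fderiv ℝ (fun y => V y i) x (EuclideanSpace.single i (1:ℝ))
      = fderiv ℝ (fun y => V y i) x (e d i) := rfl
  simp only [ContinuousLinearMap.add_apply, ContinuousLinearMap.smul_apply, smul_eq_mul]
  rw [show EuclideanSpace.single i (1:ℝ) = e d i from rfl]
  ring

-- corollary of the divergence theorem hypothesis, when the flux vanishes pointwise
lemma flux_zero {Ω : Set (Euc d)} {n : Euc d → Euc d} {σ : Measure (Euc d)}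
    (hdivthm : ∀ F : Euc d → Euc d, ContDiff ℝ 1 F →
      (∫ x in Ω, divg F x) = ∫ x in frontier Ω, ⟪F x, n x⟫ ∂σ)
    {F : Euc d → Euc d} (hF : ContDiff ℝ 1 F)
    (hFn : ∀ x ∈ frontier Ω, ⟪F x, n x⟫ = 0) :
    (∫ x in Ω, divg F x) = 0 := by
  rw [hdivthm F hF,
    MeasureTheory.setIntegral_congr_fun isClosed_frontier.measurableSet
      (fun x hx => hFn x hx : EqOn (fun x => ⟪F x, n x⟫) (fun _ => (0:ℝ)) (frontier Ω))]
  simp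

lemma inner_symGradApp (βb : Euc d → Euc d) (x v : Euc d) :
    ⟪symGradApp βb x v, v⟫ = ⟪fderiv ℝ βb x v, v⟫ := by
  unfold symGradApp
  rw [real_inner_smul_left, inner_add_left]
  rw [ContinuousLinearMap.adjoint_inner_left]
  rw [real_inner_comm v (fderiv ℝ βb x v)]
  ring

-- bound for continuous compactly supported functions
lemma bound_of_compactSupport {f : Euc d → ℝ} (hf : Continuous f) (hsupp : HasCompactSupport f) :
    ∃ C : ℝ, 0 ≤ C ∧ ∀ x, |f x| ≤ C := by
  obtain ⟨C, hC⟩ := hsupp.isCompact.exists_bound_of_continuousOn hf.continuousOn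
  refine ⟨max C 0, le_max_right _ _, fun x => ?_⟩
  by_cases hx : x ∈ tsupport f
  · exact le_trans (by simpa using hC x hx) (le_max_left _ _)
  · rw [image_eq_zero_of_notMem_tsupport hx]
    simp [le_max_right]

-- bound for the bump-mollification
lemma conv_bound (φ : ContDiffBump (0 : Euc d)) {f : Euc d → ℝ} {C : ℝ}
    (hC : 0 ≤ C) (hfC : ∀ y, |f y| ≤ C) (x : Euc d) :
    |MeasureTheory.convolution (φ.normed volume) f (ContinuousLinearMap.lsmul ℝ ℝ) volume x| ≤ C := by
  rw [MeasureTheory.convolution_def]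
  have h1 : ∀ t, ‖(ContinuousLinearMap.lsmul ℝ ℝ) (φ.normed volume t) (f (x - t))‖
      ≤ φ.normed volume t * C := by
    intro t
    simp only [ContinuousLinearMap.lsmul_apply, smul_eq_mul, Real.norm_eq_abs, abs_mul,
      abs_of_nonneg (φ.nonneg_normed t)]
    exact mul_le_mul_of_nonneg_left (hfC _) (φ.nonneg_normed t)
  calc |∫ t, (ContinuousLinearMap.lsmul ℝ ℝ) (φ.normed volume t) (f (x - t))|
      ≤ ∫ t, φ.normed volume t * C := by
        rw [← Real.norm_eq_abs]
        exact MeasureTheory.norm_integral_le_of_norm_le ((φ.integrable_normed).mul_const C)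
          (Filter.Eventually.of_forall h1)
    _ = C := by rw [MeasureTheory.integral_mul_const, φ.integral_normed, one_mul]

-- THE KEY LEMMA: weak antisymmetric integration by parts
lemma keyA {Ω : Set (Euc d)} (hΩo : IsOpen Ω) (hΩb : Bornology.IsBounded Ω)
    {n : Euc d → Euc d} {σ : Measure (Euc d)}
    (hdivthm : ∀ F : Euc d → Euc d, ContDiff ℝ 1 F →
      (∫ x in Ω, divg F x) = ∫ x in frontier Ω, ⟪F x, n x⟫ ∂σ)
    {u : Euc d → ℝ} (hu : ContDiff ℝ 2 u) (hubc : ∀ x ∈ frontier Ω, u x = 0)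
    {a : Euc d → ℝ} (ha : ContDiff ℝ 1 a) (p q : Fin d) :
    ∫ x in Ω, (fderiv ℝ a x (e d q) * gradient u x p
      - fderiv ℝ a x (e d p) * gradient u x q) = 0 := by
  classical
  -- step 1 : a radius R with closure Ω ⊆ ball 0 R
  obtain ⟨R, hR0, hRsub⟩ := hΩb.isCompact_closure.isBounded.subset_ball_lt 0 0
  -- step 2 : cutoff
  set χ : ContDiffBump (0 : Euc d) := ⟨R + 1, R + 2, by linarith, by linarith⟩ with hχdef
  set ta : Euc d → ℝ := fun x => χ x * a x with hta
  have hχ1 : ∀ y ∈ Metric.ball (0 : Euc d) (R + 1), χ y = 1 := fun y hy =>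
    χ.one_of_mem_closedBall (Metric.ball_subset_closedBall hy)
  have htaC : ContDiff ℝ 1 ta := χ.contDiff.mul ha
  have htasupp : HasCompactSupport ta := χ.hasCompactSupport.mul_right
  have hsubball : Ω ⊆ Metric.ball (0 : Euc d) (R + 1) :=
    fun x hx => Metric.ball_subset_ball (by linarith) (hRsub (subset_closure hx))
  have hfeq : ∀ x ∈ Metric.ball (0 : Euc d) (R + 1), fderiv ℝ ta x = fderiv ℝ a x := by
    intro x hx
    have hev : ta =ᶠ[nhds x] a := by
      filter_upwards [Metric.isOpen_ball.mem_nhds hx] with y hy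
      rw [hta]; simp only; rw [hχ1 y hy, one_mul]
    exact hev.fderiv_eq
  -- step 3 : reduce to the compactly supported version
  suffices hgoal : ∫ x in Ω, (fderiv ℝ ta x (e d q) * gradient u x p
      - fderiv ℝ ta x (e d p) * gradient u x q) = 0 by
    rw [← hgoal]
    refine MeasureTheory.setIntegral_congr_fun hΩo.measurableSet fun x hx => ?_
    rw [hfeq x (hsubball hx)]
  -- step 4 : bump sequence
  have hpos : ∀ k : ℕ, (0:ℝ) < ((k:ℝ)+1)⁻¹ := fun k => by positivity
  set ρ : ℕ → ContDiffBump (0 : Euc d) :=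
    (fun k => ⟨((k:ℝ)+1)⁻¹/2, ((k:ℝ)+1)⁻¹, by positivity, by
      have := hpos k; linarith⟩) with hρdef
  have hρloc : ∀ k, MeasureTheory.LocallyIntegrable ((ρ k).normed volume) volume :=
    fun k => ((ρ k).integrable_normed).locallyIntegrable
  set b : ℕ → Euc d → ℝ := (fun k =>
    MeasureTheory.convolution ((ρ k).normed volume) ta (ContinuousLinearMap.lsmul ℝ ℝ)
      volume) with hbdef
  have hbsmooth : ∀ k, ContDiff ℝ 2 (b k) := by
    intro k
    exact HasCompactSupport.contDiff_convolution_left _ (ρ k).hasCompactSupport_normed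
      (ρ k).contDiff_normed (htaC.continuous.locallyIntegrable)
  -- derivative of the mollification
  have hbderiv : ∀ k x (v : Euc d), fderiv ℝ (b k) x v =
      MeasureTheory.convolution ((ρ k).normed volume) (fun y => fderiv ℝ ta y v)
        (ContinuousLinearMap.lsmul ℝ ℝ) volume x := by
    intro k x v
    have h1 := htasupp.hasFDerivAt_convolution_right (ContinuousLinearMap.lsmul ℝ ℝ)
      (hρloc k) htaC x
    rw [h1.fderiv]
    exact MeasureTheory.convolution_precompR_apply (ContinuousLinearMap.lsmul ℝ ℝ) (hρloc k)
      (htasupp.fderiv (𝕜 := ℝ)) ((htaC.continuous_fderiv one_ne_zero)) x v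
  -- coordinate collapse helper
  have sum_mul_e : ∀ (f : Fin d → ℝ) (j : Fin d), (∑ i, f i * e d j i) = f j := by
    intro f j
    have : ∀ i : Fin d, f i * e d j i = if i = j then f i else 0 := by
      intro i; rw [e_apply]; by_cases h : i = j <;> simp [h]
    simp_rw [this]
    simp
  -- the divergence-free fields
  set V : ℕ → Euc d → Euc d := (fun k x =>
    (fderiv ℝ (b k) x (e d q)) • e d p - (fderiv ℝ (b k) x (e d p)) • e d q) with hVdef
  have hDqC : ∀ (k : ℕ) (v : Euc d), ContDiff ℝ 1 (fun x => fderiv ℝ (b k) x v) :=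
    fun k v => contDiff_fderiv_apply (hbsmooth k) v
  have hVC : ∀ k, ContDiff ℝ 1 (V k) := fun k =>
    ((hDqC k (e d q)).smul contDiff_const).sub ((hDqC k (e d p)).smul contDiff_const)
  -- Schwarz symmetry for the smooth mollifications
  have hschwarz : ∀ (k : ℕ) (x : Euc d) (v w : Euc d),
      fderiv ℝ (fun y => fderiv ℝ (b k) y v) x w
        = fderiv ℝ (fun y => fderiv ℝ (b k) y w) x v := by
    intro k x v w
    have hsymm : IsSymmSndFDerivAt ℝ (b k) x :=
      ((hbsmooth k).contDiffAt).isSymmSndFDerivAt (by simp)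
    have hdf : DifferentiableAt ℝ (fderiv ℝ (b k)) x :=
      (((hbsmooth k).fderiv_right (by norm_num : (1:WithTop ℕ∞) + 1 ≤ 2)).differentiable
        one_ne_zero).differentiableAt
    have h2 : ∀ (v w : Euc d), fderiv ℝ (fun y => fderiv ℝ (b k) y v) x w
        = fderiv ℝ (fderiv ℝ (b k)) x w v := by
      intro v w
      rw [fderiv_clm_apply hdf (differentiableAt_const v)]
      simp
    rw [h2, h2, hsymm w v]
  -- coordinates of V
  have hVcoord : ∀ (k : ℕ) (y : Euc d) (i : Fin d), V k y i
      = fderiv ℝ (b k) y (e d q) * e d p i - fderiv ℝ (b k) y (e d p) * e d q i := by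
    intro k y i; rw [hVdef]; rfl
  have hdq : ∀ (k : ℕ) (v : Euc d), Differentiable ℝ (fun y => fderiv ℝ (b k) y v) :=
    fun k v => (hDqC k v).differentiable one_ne_zero
  -- V is divergence free
  have hdivV : ∀ (k : ℕ) (x : Euc d), divg (V k) x = 0 := by
    intro k x
    unfold divg
    have hstep : ∀ i : Fin d, fderiv ℝ (fun y => V k y i) x (EuclideanSpace.single i 1)
        = e d p i * fderiv ℝ (fun y => fderiv ℝ (b k) y (e d q)) x (e d i)
          - e d q i * fderiv ℝ (fun y => fderiv ℝ (b k) y (e d p)) x (e d i) := by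
      intro i
      have hfun : (fun y => V k y i)
          = fun y => (fderiv ℝ (b k) y (e d q)) * e d p i
            - (fderiv ℝ (b k) y (e d p)) * e d q i := by
        funext y; rw [hVcoord k y i]
      rw [hfun, fderiv_fun_sub ((hdq k (e d q) x).mul_const _) ((hdq k (e d p) x).mul_const _),
        fderiv_mul_const (hdq k (e d q) x), fderiv_mul_const (hdq k (e d p) x)]
      simp only [ContinuousLinearMap.sub_apply, ContinuousLinearMap.smul_apply, smul_eq_mul]
      rfl
    rw [Finset.sum_congr rfl (fun i _ => hstep i), Finset.sum_sub_distrib]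
    have hc1 : (∑ i, e d p i * fderiv ℝ (fun y => fderiv ℝ (b k) y (e d q)) x (e d i))
        = fderiv ℝ (fun y => fderiv ℝ (b k) y (e d q)) x (e d p) := by
      rw [clm_sum_coords (fderiv ℝ (fun y => fderiv ℝ (b k) y (e d q)) x) (e d p)]
      simp [smul_eq_mul]
    have hc2 : (∑ i, e d q i * fderiv ℝ (fun y => fderiv ℝ (b k) y (e d p)) x (e d i))
        = fderiv ℝ (fun y => fderiv ℝ (b k) y (e d p)) x (e d q) := by
      rw [clm_sum_coords (fderiv ℝ (fun y => fderiv ℝ (b k) y (e d p)) x) (e d q)]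
      simp [smul_eq_mul]
    rw [hc1, hc2, hschwarz k x (e d q) (e d p), sub_self]
  -- divergence theorem applied to u • V k
  have hIk : ∀ k : ℕ, ∫ x in Ω, (fderiv ℝ (b k) x (e d q) * gradient u x p
      - fderiv ℝ (b k) x (e d p) * gradient u x q) = 0 := by
    intro k
    have hFC : ContDiff ℝ 1 (fun x => u x • V k x) :=
      (hu.of_le one_le_two).smul (hVC k)
    have h0 : (∫ x in Ω, divg (fun y => u y • V k y) x) = 0 :=
      flux_zero hdivthm hFC (fun x hx => by rw [real_inner_smul_left, hubc x hx, zero_mul])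
    have hpt : ∀ x : Euc d, divg (fun y => u y • V k y) x
        = fderiv ℝ (b k) x (e d q) * gradient u x p
          - fderiv ℝ (b k) x (e d p) * gradient u x q := by
      intro x
      rw [divg_smul ((hu.differentiable two_ne_zero) x)
        (((hVC k).differentiable one_ne_zero) x), hdivV k x, mul_zero, add_zero]
      have hterm : ∀ i : Fin d, fderiv ℝ u x (e d i) * V k x i
          = (fun j => fderiv ℝ u x (e d j) * fderiv ℝ (b k) x (e d q)) i * e d p i
            - (fun j => fderiv ℝ u x (e d j) * fderiv ℝ (b k) x (e d p)) i * e d q i := by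
        intro i; rw [hVcoord k x i]; ring
      rw [Finset.sum_congr rfl (fun i _ => hterm i), Finset.sum_sub_distrib,
        sum_mul_e, sum_mul_e]
      simp only []
      rw [← grad_apply u x p, ← grad_apply u x q]
      ring
    rw [← h0]
    exact MeasureTheory.setIntegral_congr_fun hΩo.measurableSet (fun x _ => (hpt x)) |>.symm
  -- bounds for dominated convergence
  obtain ⟨Cq, hCq0, hCq⟩ := bound_of_compactSupport
    (cont_fderiv_apply_of_contDiff_one htaC (e d q))
    ((htasupp.fderiv (𝕜 := ℝ)).comp_left (g := fun T : Euc d →L[ℝ] ℝ => T (e d q)) rfl)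
  obtain ⟨Cp, hCp0, hCp⟩ := bound_of_compactSupport
    (cont_fderiv_apply_of_contDiff_one htaC (e d p))
    ((htasupp.fderiv (𝕜 := ℝ)).comp_left (g := fun T : Euc d →L[ℝ] ℝ => T (e d p)) rfl)
  have hGcont : ∀ j : Fin d, Continuous (fun x => gradient u x j) := by
    intro j
    exact (EuclideanSpace.proj (𝕜 := ℝ) j).continuous.comp (contDiff_gradient hu).continuous
  obtain ⟨Bp, hBp⟩ := hΩb.isCompact_closure.exists_bound_of_continuousOn
    ((hGcont p).continuousOn)
  obtain ⟨Bq, hBq⟩ := hΩb.isCompact_closure.exists_bound_of_continuousOn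
    ((hGcont q).continuousOn)
  -- the integrands
  set Fk : ℕ → Euc d → ℝ := (fun k x => fderiv ℝ (b k) x (e d q) * gradient u x p
      - fderiv ℝ (b k) x (e d p) * gradient u x q) with hFkdef
  set flim : Euc d → ℝ := (fun x => fderiv ℝ ta x (e d q) * gradient u x p
      - fderiv ℝ ta x (e d p) * gradient u x q) with hflimdef
  have hmeas : ∀ k : ℕ, MeasureTheory.AEStronglyMeasurable (Fk k) (volume.restrict Ω) := by
    intro k
    exact (((hDqC k (e d q)).continuous.mul (hGcont p)).sub
      ((hDqC k (e d p)).continuous.mul (hGcont q))).aestronglyMeasurable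
  have hboundint : MeasureTheory.Integrable (fun _ : Euc d => Cq * Bp + Cp * Bq)
      (volume.restrict Ω) := by
    rw [MeasureTheory.integrable_const_iff]
    right
    refine ⟨?_⟩
    rw [MeasureTheory.Measure.restrict_apply_univ]
    exact vol_lt_top hΩb
  have hbound : ∀ k : ℕ, ∀ᵐ x ∂(volume.restrict Ω), ‖Fk k x‖ ≤ Cq * Bp + Cp * Bq := by
    intro k
    rw [MeasureTheory.ae_restrict_iff' hΩo.measurableSet]
    refine Filter.Eventually.of_forall (fun x hx => ?_)
    have h1 : |fderiv ℝ (b k) x (e d q)| ≤ Cq := by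
      rw [hbderiv k x (e d q)]
      exact conv_bound (ρ k) hCq0 hCq x
    have h2 : |fderiv ℝ (b k) x (e d p)| ≤ Cp := by
      rw [hbderiv k x (e d p)]
      exact conv_bound (ρ k) hCp0 hCp x
    have h3 : |gradient u x p| ≤ Bp := by
      have := hBp x (subset_closure hx); rwa [Real.norm_eq_abs] at this
    have h4 : |gradient u x q| ≤ Bq := by
      have := hBq x (subset_closure hx); rwa [Real.norm_eq_abs] at this
    rw [hFkdef, Real.norm_eq_abs]
    calc |fderiv ℝ (b k) x (e d q) * gradient u x p
        - fderiv ℝ (b k) x (e d p) * gradient u x q|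
        ≤ |fderiv ℝ (b k) x (e d q) * gradient u x p|
          + |fderiv ℝ (b k) x (e d p) * gradient u x q| := abs_sub _ _
      _ ≤ Cq * Bp + Cp * Bq := by
          rw [abs_mul, abs_mul]
          exact add_le_add (mul_le_mul h1 h3 (abs_nonneg _) hCq0)
            (mul_le_mul h2 h4 (abs_nonneg _) hCp0)
  have hrOut : Filter.Tendsto (fun k : ℕ => (ρ k).rOut) Filter.atTop (nhds 0) := by
    have : (fun k : ℕ => (ρ k).rOut) = fun k : ℕ => ((k : ℝ) + 1)⁻¹ := rfl
    rw [this]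
    simp_rw [← one_div]
    exact tendsto_one_div_add_atTop_nhds_zero_nat
  have hlim : ∀ᵐ x ∂(volume.restrict Ω),
      Filter.Tendsto (fun k => Fk k x) Filter.atTop (nhds (flim x)) := by
    refine Filter.Eventually.of_forall (fun x => ?_)
    have hconvq : Filter.Tendsto (fun k => fderiv ℝ (b k) x (e d q)) Filter.atTop
        (nhds (fderiv ℝ ta x (e d q))) := by
      simp_rw [fun k => hbderiv k x (e d q)]
      exact ContDiffBump.convolution_tendsto_right_of_continuous hrOut
        (cont_fderiv_apply_of_contDiff_one htaC (e d q)) x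
    have hconvp : Filter.Tendsto (fun k => fderiv ℝ (b k) x (e d p)) Filter.atTop
        (nhds (fderiv ℝ ta x (e d p))) := by
      simp_rw [fun k => hbderiv k x (e d p)]
      exact ContDiffBump.convolution_tendsto_right_of_continuous hrOut
        (cont_fderiv_apply_of_contDiff_one htaC (e d p)) x
    exact (hconvq.mul tendsto_const_nhds).sub (hconvp.mul tendsto_const_nhds)
  have hfinal := MeasureTheory.tendsto_integral_of_dominated_convergence
    (fun _ : Euc d => Cq * Bp + Cp * Bq) hmeas hboundint hbound hlim
  simp_rw [hFkdef] at hfinal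
  have hzero : Filter.Tendsto (fun _ : ℕ => (0:ℝ)) Filter.atTop
      (nhds (∫ x in Ω, flim x)) := by
    refine hfinal.congr (fun k => ?_)
    exact hIk k
  exact tendsto_nhds_unique hzero tendsto_const_nhds

-- Fact B : tangential field flux
lemma factB {Ω : Set (Euc d)} (hΩb : Bornology.IsBounded Ω)
    {n : Euc d → Euc d} {σ : Measure (Euc d)}
    (hdivthm : ∀ F : Euc d → Euc d, ContDiff ℝ 1 F →
      (∫ x in Ω, divg F x) = ∫ x in frontier Ω, ⟪F x, n x⟫ ∂σ)
    {βb : Euc d → Euc d} (hβb : ContDiff ℝ 1 βb)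
    (hβbn : ∀ x ∈ frontier Ω, ⟪βb x, n x⟫ = 0)
    {u : Euc d → ℝ} (hu : ContDiff ℝ 2 u) :
    ∫ x in Ω, (2 * ⟪fderiv ℝ (fun y => gradient u y) x (βb x), gradient u x⟫
      + ⟪gradient u x, gradient u x⟫ * divg βb x) = 0 := by
  have hG1 : ContDiff ℝ 1 (fun y => gradient u y) := contDiff_gradient hu
  have hGd : Differentiable ℝ (fun y => gradient u y) := hG1.differentiable one_ne_zero
  set h : Euc d → ℝ := fun y => ⟪gradient u y, gradient u y⟫ with hhdef
  have hhC : ContDiff ℝ 1 h := hG1.inner ℝ hG1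
  have hFC : ContDiff ℝ 1 (fun x => h x • βb x) := hhC.smul hβb
  have h0 : (∫ x in Ω, divg (fun y => h y • βb y) x) = 0 :=
    flux_zero hdivthm hFC (fun x hx => by rw [real_inner_smul_left, hβbn x hx, mul_zero])
  have hpt : ∀ x : Euc d, divg (fun y => h y • βb y) x
      = 2 * ⟪fderiv ℝ (fun y => gradient u y) x (βb x), gradient u x⟫
        + ⟪gradient u x, gradient u x⟫ * divg βb x := by
    intro x
    rw [divg_smul ((hhC.differentiable one_ne_zero) x) ((hβb.differentiable one_ne_zero) x)]
    congr 1
    have hder : ∀ v : Euc d, fderiv ℝ h x v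
        = 2 * ⟪fderiv ℝ (fun y => gradient u y) x v, gradient u x⟫ := by
      intro v
      rw [hhdef]
      rw [fderiv_inner_apply (𝕜 := ℝ) (hGd x) (hGd x) v]
      rw [real_inner_comm]
      ring
    have hexp : ∀ i : Fin d, fderiv ℝ h x (e d i) * βb x i
        = 2 * (βb x i * ⟪fderiv ℝ (fun y => gradient u y) x (e d i), gradient u x⟫) := by
      intro i; rw [hder (e d i)]; ring
    rw [Finset.sum_congr rfl (fun i _ => hexp i), ← Finset.mul_sum]
    congr 1
    have hlin : ⟪fderiv ℝ (fun y => gradient u y) x (βb x), gradient u x⟫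
        = ∑ i, βb x i * ⟪fderiv ℝ (fun y => gradient u y) x (e d i), gradient u x⟫ := by
      rw [clm_sum_coords (fderiv ℝ (fun y => gradient u y) x) (βb x), sum_inner]
      refine Finset.sum_congr rfl fun i _ => ?_
      rw [real_inner_smul_left]
    rw [hlin]
  calc ∫ x in Ω, (2 * ⟪fderiv ℝ (fun y => gradient u y) x (βb x), gradient u x⟫
        + ⟪gradient u x, gradient u x⟫ * divg βb x)
      = ∫ x in Ω, divg (fun y => h y • βb y) x :=
        MeasureTheory.integral_congr_ae (Filter.Eventually.of_forall (fun x => (hpt x).symm))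
    _ = 0 := h0

-- Fact 2 : summed antisymmetric identities
lemma fact2 {Ω : Set (Euc d)} (hΩo : IsOpen Ω) (hΩb : Bornology.IsBounded Ω)
    {n : Euc d → Euc d} {σ : Measure (Euc d)}
    (hdivthm : ∀ F : Euc d → Euc d, ContDiff ℝ 1 F →
      (∫ x in Ω, divg F x) = ∫ x in frontier Ω, ⟪F x, n x⟫ ∂σ)
    {βb : Euc d → Euc d} (hβb : ContDiff ℝ 1 βb)
    {u : Euc d → ℝ} (hu : ContDiff ℝ 2 u) (hubc : ∀ x ∈ frontier Ω, u x = 0) :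
    ∫ x in Ω, (⟪fderiv ℝ (fun y => gradient u y) x (βb x), gradient u x⟫
      + ⟪gradient u x, gradient u x⟫ * divg βb x
      - ⟪fderiv ℝ βb x (gradient u x), gradient u x⟫
      - ⟪βb x, gradient u x⟫ * lapl u x) = 0 := by
  have hG1 : ContDiff ℝ 1 (fun y => gradient u y) := contDiff_gradient hu
  have hGd : Differentiable ℝ (fun y => gradient u y) := hG1.differentiable one_ne_zero
  have hβd : Differentiable ℝ βb := hβb.differentiable one_ne_zero
  have hGpC : ∀ j : Fin d, ContDiff ℝ 1 (fun x => gradient u x j) := fun j =>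
    (EuclideanSpace.proj (𝕜 := ℝ) j).contDiff.comp hG1
  have hβpC : ∀ j : Fin d, ContDiff ℝ 1 (fun x => βb x j) := fun j =>
    (EuclideanSpace.proj (𝕜 := ℝ) j).contDiff.comp hβb
  set A : Fin d → Fin d → Euc d → ℝ :=
    (fun p q x => gradient u x p * βb x q - βb x p * gradient u x q) with hAdef
  have haC : ∀ p q : Fin d, ContDiff ℝ 1 (A p q) := fun p q =>
    ((hGpC p).mul (hβpC q)).sub ((hβpC p).mul (hGpC q))
  -- derivative of A p q
  have hD : ∀ (p q : Fin d) (x v : Euc d), fderiv ℝ (A p q) x v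
      = ((fderiv ℝ (fun y => gradient u y) x v) p * βb x q
          + gradient u x p * (fderiv ℝ βb x v) q)
        - ((fderiv ℝ βb x v) p * gradient u x q
          + βb x p * (fderiv ℝ (fun y => gradient u y) x v) q) := by
    intro p q x v
    have d1 : DifferentiableAt ℝ (fun y => gradient u y p) x := diff_coord (hGd x) p
    have d2 : DifferentiableAt ℝ (fun y => βb y q) x := diff_coord (hβd x) q
    have d3 : DifferentiableAt ℝ (fun y => βb y p) x := diff_coord (hβd x) p
    have d4 : DifferentiableAt ℝ (fun y => gradient u y q) x := diff_coord (hGd x) q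
    rw [hAdef]
    simp only []
    rw [fderiv_fun_sub (d1.fun_mul d2) (d3.fun_mul d4), fderiv_fun_mul d1 d2, fderiv_fun_mul d3 d4]
    simp only [ContinuousLinearMap.sub_apply, ContinuousLinearMap.add_apply,
      ContinuousLinearMap.smul_apply, smul_eq_mul]
    rw [coord_fderiv (hGd x) p v, coord_fderiv (hβd x) q v, coord_fderiv (hβd x) p v,
      coord_fderiv (hGd x) q v]
    ring
  -- the key identities
  have hkey : ∀ p q : Fin d, ∫ x in Ω,
      (fderiv ℝ (A p q) x (e d q) * gradient u x p
        - fderiv ℝ (A p q) x (e d p) * gradient u x q) = 0 := fun p q =>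
    keyA hΩo hΩb hdivthm hu hubc (haC p q) p q
  -- integrability of each piece
  have hfcont : ∀ p q : Fin d, Continuous (fun x =>
      fderiv ℝ (A p q) x (e d q) * gradient u x p
        - fderiv ℝ (A p q) x (e d p) * gradient u x q) := by
    intro p q
    exact ((cont_fderiv_apply_of_contDiff_one (haC p q) (e d q)).mul
        (hGpC p).continuous).sub
      ((cont_fderiv_apply_of_contDiff_one (haC p q) (e d p)).mul (hGpC q).continuous)
  -- summed identity
  have hsum0 : ∫ x in Ω, (∑ p, ∑ q,
      (fderiv ℝ (A p q) x (e d q) * gradient u x p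
        - fderiv ℝ (A p q) x (e d p) * gradient u x q)) = 0 := by
    rw [MeasureTheory.integral_finset_sum _ (fun p _ =>
      MeasureTheory.integrable_finset_sum _ (fun q _ =>
        cont_integrableOn hΩb (hfcont p q)))]
    rw [Finset.sum_congr rfl (fun p _ => MeasureTheory.integral_finset_sum _
      (fun q _ => cont_integrableOn hΩb (hfcont p q)))]
    rw [Finset.sum_congr rfl (fun p _ => Finset.sum_congr rfl (fun q _ => hkey p q))]
    simp
  -- pointwise algebra
  have hptwise : ∀ x : Euc d, (∑ p, ∑ q,
      (fderiv ℝ (A p q) x (e d q) * gradient u x p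
        - fderiv ℝ (A p q) x (e d p) * gradient u x q))
      = 2 * (⟪fderiv ℝ (fun y => gradient u y) x (βb x), gradient u x⟫
        + ⟪gradient u x, gradient u x⟫ * divg βb x
        - ⟪fderiv ℝ βb x (gradient u x), gradient u x⟫
        - ⟪βb x, gradient u x⟫ * lapl u x) := by
    intro x
    -- antisymmetry of A
    have hDneg : ∀ (p q : Fin d) (v : Euc d),
        fderiv ℝ (A p q) x v = -(fderiv ℝ (A q p) x v) := by
      intro p q v
      have h1 : A p q = fun y => -(A q p y) := by
        funext y; rw [hAdef]; simp only []; ring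
      rw [h1, fderiv_fun_neg]
      simp
    -- collapse lemmas
    have K1 : ∀ j : Fin d, (∑ i, (fderiv ℝ (fun y => gradient u y) x (e d i)) j * βb x i)
        = (fderiv ℝ (fun y => gradient u y) x (βb x)) j := by
      intro j
      calc (∑ i, (fderiv ℝ (fun y => gradient u y) x (e d i)) j * βb x i)
          = ∑ i, βb x i • ((EuclideanSpace.proj (𝕜 := ℝ) j).comp
              (fderiv ℝ (fun y => gradient u y) x)) (e d i) := by
            refine Finset.sum_congr rfl fun i _ => ?_
            rw [smul_eq_mul, mul_comm]
            rfl
        _ = ((EuclideanSpace.proj (𝕜 := ℝ) j).comp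
              (fderiv ℝ (fun y => gradient u y) x)) (βb x) := (clm_sum_coords _ _).symm
        _ = (fderiv ℝ (fun y => gradient u y) x (βb x)) j := rfl
    have K2 : ∀ j : Fin d, (∑ i, (fderiv ℝ βb x (e d i)) j * gradient u x i)
        = (fderiv ℝ βb x (gradient u x)) j := by
      intro j
      calc (∑ i, (fderiv ℝ βb x (e d i)) j * gradient u x i)
          = ∑ i, gradient u x i • ((EuclideanSpace.proj (𝕜 := ℝ) j).comp
              (fderiv ℝ βb x)) (e d i) := by
            refine Finset.sum_congr rfl fun i _ => ?_
            rw [smul_eq_mul, mul_comm]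
            rfl
        _ = ((EuclideanSpace.proj (𝕜 := ℝ) j).comp
              (fderiv ℝ βb x)) (gradient u x) := (clm_sum_coords _ _).symm
        _ = (fderiv ℝ βb x (gradient u x)) j := rfl
    have K3 : (∑ i, (fderiv ℝ βb x (e d i)) i) = divg βb x := (divg_eq (hβd x)).symm
    have K4 : (∑ i, (fderiv ℝ (fun y => gradient u y) x (e d i)) i) = lapl u x :=
      (lapl_eq (hGd x)).symm
    -- first: split into two halves and identify them
    have hhalf : (∑ p, ∑ q, (fderiv ℝ (A p q) x (e d q) * gradient u x p
          - fderiv ℝ (A p q) x (e d p) * gradient u x q))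
        = 2 * (∑ p, ∑ q, fderiv ℝ (A p q) x (e d q) * gradient u x p) := by
      rw [Finset.sum_congr rfl (fun p _ => Finset.sum_sub_distrib _ _), Finset.sum_sub_distrib]
      have hswap : (∑ p, ∑ q, fderiv ℝ (A p q) x (e d p) * gradient u x q)
          = -(∑ p, ∑ q, fderiv ℝ (A p q) x (e d q) * gradient u x p) := by
        calc (∑ p, ∑ q, fderiv ℝ (A p q) x (e d p) * gradient u x q)
            = ∑ q, ∑ p, fderiv ℝ (A p q) x (e d p) * gradient u x q := Finset.sum_comm
          _ = ∑ q, ∑ p, -(fderiv ℝ (A q p) x (e d p) * gradient u x q) := by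
              refine Finset.sum_congr rfl fun q _ => Finset.sum_congr rfl fun p _ => ?_
              rw [hDneg p q (e d p)]; ring
          _ = -(∑ q, ∑ p, fderiv ℝ (A q p) x (e d p) * gradient u x q) := by
              simp [Finset.sum_neg_distrib]
          _ = -(∑ p, ∑ q, fderiv ℝ (A p q) x (e d q) * gradient u x p) := rfl
      rw [hswap]
      ring
    rw [hhalf]
    congr 1
    -- expand the half
    have hexp : ∀ p : Fin d, (∑ q, fderiv ℝ (A p q) x (e d q) * gradient u x p)
        = gradient u x p * (fderiv ℝ (fun y => gradient u y) x (βb x)) p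
          + (gradient u x p * gradient u x p) * divg βb x
          - gradient u x p * (fderiv ℝ βb x (gradient u x)) p
          - (βb x p * gradient u x p) * lapl u x := by
      intro p
      have hterm : ∀ q : Fin d, fderiv ℝ (A p q) x (e d q) * gradient u x p
          = gradient u x p * ((fderiv ℝ (fun y => gradient u y) x (e d q)) p * βb x q)
            + (gradient u x p * gradient u x p) * (fderiv ℝ βb x (e d q)) q
            - gradient u x p * ((fderiv ℝ βb x (e d q)) p * gradient u x q)
            - (βb x p * gradient u x p)
              * (fderiv ℝ (fun y => gradient u y) x (e d q)) q := by
        intro q; rw [hD p q x (e d q)]; ring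
      rw [Finset.sum_congr rfl (fun q _ => hterm q)]
      rw [Finset.sum_sub_distrib, Finset.sum_sub_distrib, Finset.sum_add_distrib]
      rw [← Finset.mul_sum, ← Finset.mul_sum, ← Finset.mul_sum, ← Finset.mul_sum]
      rw [K1 p, K2 p, K3, K4]
    rw [Finset.sum_congr rfl (fun p _ => hexp p)]
    rw [Finset.sum_sub_distrib, Finset.sum_sub_distrib, Finset.sum_add_distrib]
    rw [← Finset.sum_mul, ← Finset.sum_mul]
    rw [inner_eq_sum (fderiv ℝ (fun y => gradient u y) x (βb x)) (gradient u x),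
      inner_eq_sum (fderiv ℝ βb x (gradient u x)) (gradient u x),
      inner_eq_sum (gradient u x) (gradient u x),
      inner_eq_sum (βb x) (gradient u x)]
    rw [Finset.sum_congr rfl (fun p _ => mul_comm (gradient u x p)
      ((fderiv ℝ (fun y => gradient u y) x (βb x)) p)),
      Finset.sum_congr rfl (fun p _ => mul_comm (gradient u x p)
      ((fderiv ℝ βb x (gradient u x)) p))]
  -- conclude
  have h2 : ∫ x in Ω, (2:ℝ) * (⟪fderiv ℝ (fun y => gradient u y) x (βb x), gradient u x⟫
      + ⟪gradient u x, gradient u x⟫ * divg βb x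
      - ⟪fderiv ℝ βb x (gradient u x), gradient u x⟫
      - ⟪βb x, gradient u x⟫ * lapl u x) = 0 := by
    rw [← hsum0]
    exact MeasureTheory.integral_congr_ae
      (Filter.Eventually.of_forall (fun x => (hptwise x).symm))
  rw [MeasureTheory.integral_const_mul] at h2
  linarith

end TIBP

open TIBP

/-- transport integration-by-parts identity, identity (transport_identity)
in the proof of Theorem 2.4: on a bounded open (Lipschitz) domain Ω ⊂ ℝ^d (d = 2,3) with
outward unit normal `n` and boundary measure `σ` for which the divergence theorem holds,
if β̄ ∈ C¹ with β̄·n = 0 on ∂Ω and u ∈ C² with u = 0 on ∂Ω, then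
−∫_Ω (β̄·∇u) Δu dx = ∫_Ω (∇_S β̄ ∇u)·∇u dx − ½ ∫_Ω (∇·β̄)|∇u|² dx. -/
theorem transport_integration_by_parts_identity
    (d : ℕ) (hd : d = 2 ∨ d = 3) (Ω : Set (Euc d))
    (hΩo : IsOpen Ω) (hΩb : Bornology.IsBounded Ω) (hΩne : Ω.Nonempty)
    (n : Euc d → Euc d) (hn : ∀ x ∈ frontier Ω, ‖n x‖ = 1)
    (σ : Measure (Euc d))
    -- the divergence theorem holds on Ω
    (hdivthm : ∀ F : Euc d → Euc d, ContDiff ℝ 1 F →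
      (∫ x in Ω, divg F x) = ∫ x in frontier Ω, ⟪F x, n x⟫ ∂σ)
    (βb : Euc d → Euc d) (hβb : ContDiff ℝ 1 βb)
    (hβbn : ∀ x ∈ frontier Ω, ⟪βb x, n x⟫ = 0)
    (u : Euc d → ℝ) (hu : ContDiff ℝ 2 u)
    (hubc : ∀ x ∈ frontier Ω, u x = 0) :
    -(∫ x in Ω, ⟪βb x, gradient u x⟫ * lapl u x) =
      (∫ x in Ω, ⟪symGradApp βb x (gradient u x), gradient u x⟫) -
        (1 / 2 : ℝ) * ∫ x in Ω, divg βb x * ‖gradient u x‖ ^ 2 := by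
  have hG1 : ContDiff ℝ 1 (fun y => gradient u y) := contDiff_gradient hu
  have hGd : Differentiable ℝ (fun y => gradient u y) := hG1.differentiable one_ne_zero
  have hβd : Differentiable ℝ βb := hβb.differentiable one_ne_zero
  -- continuity facts
  have hGc : Continuous (fun y => gradient u y) := hG1.continuous
  have hDGc : Continuous (fderiv ℝ (fun y => gradient u y)) := hG1.continuous_fderiv one_ne_zero
  have hDβc : Continuous (fderiv ℝ βb) := hβb.continuous_fderiv one_ne_zero
  have hc1 : Continuous (fun x => ⟪fderiv ℝ (fun y => gradient u y) x (βb x), gradient u x⟫) :=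
    (hDGc.clm_apply hβb.continuous).inner hGc
  have hdivβc : Continuous (fun x => divg βb x) := by
    have hfun : (fun x => divg βb x) = fun x => ∑ i, (fderiv ℝ βb x (e d i)) i := by
      funext x; exact divg_eq (hβd x)
    rw [hfun]
    exact continuous_finset_sum _ (fun i _ =>
      (EuclideanSpace.proj (𝕜 := ℝ) i).continuous.comp (hDβc.clm_apply continuous_const))
  have hlaplc : Continuous (fun x => lapl u x) := by
    have hfun : (fun x => lapl u x)
        = fun x => ∑ i, (fderiv ℝ (fun y => gradient u y) x (e d i)) i := by
      funext x; exact lapl_eq (hGd x)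
    rw [hfun]
    exact continuous_finset_sum _ (fun i _ =>
      (EuclideanSpace.proj (𝕜 := ℝ) i).continuous.comp (hDGc.clm_apply continuous_const))
  have hc2 : Continuous (fun x => ⟪gradient u x, gradient u x⟫ * divg βb x) :=
    (hGc.inner hGc).mul hdivβc
  have hc3 : Continuous (fun x => ⟪fderiv ℝ βb x (gradient u x), gradient u x⟫) :=
    (hDβc.clm_apply hGc).inner hGc
  have hc4 : Continuous (fun x => ⟪βb x, gradient u x⟫ * lapl u x) :=
    (hβb.continuous.inner hGc).mul hlaplc
  have int1 := cont_integrableOn hΩb hc1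
  have int2 := cont_integrableOn hΩb hc2
  have int3 := cont_integrableOn hΩb hc3
  have int4 := cont_integrableOn hΩb hc4
  -- Fact B
  have hB := factB hΩb hdivthm hβb hβbn hu
  have int2x1 : MeasureTheory.IntegrableOn
      (fun x => (2:ℝ) * ⟪fderiv ℝ (fun y => gradient u y) x (βb x), gradient u x⟫) Ω volume :=
    int1.const_mul 2
  rw [MeasureTheory.integral_add int2x1 int2, MeasureTheory.integral_const_mul] at hB
  -- Fact 2
  have hF2 := fact2 hΩo hΩb hdivthm hβb hu hubc
  have intAB : MeasureTheory.IntegrableOn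
      (fun x => ⟪fderiv ℝ (fun y => gradient u y) x (βb x), gradient u x⟫
        + ⟪gradient u x, gradient u x⟫ * divg βb x) Ω volume := int1.add int2
  have intABC : MeasureTheory.IntegrableOn
      (fun x => ⟪fderiv ℝ (fun y => gradient u y) x (βb x), gradient u x⟫
        + ⟪gradient u x, gradient u x⟫ * divg βb x
        - ⟪fderiv ℝ βb x (gradient u x), gradient u x⟫) Ω volume := intAB.sub int3
  rw [MeasureTheory.integral_sub intABC int4,
    MeasureTheory.integral_sub intAB int3,
    MeasureTheory.integral_add int1 int2] at hF2
  -- identify the conclusion's integrals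
  have hT2 : (∫ x in Ω, ⟪symGradApp βb x (gradient u x), gradient u x⟫)
      = ∫ x in Ω, ⟪fderiv ℝ βb x (gradient u x), gradient u x⟫ :=
    MeasureTheory.integral_congr_ae (Filter.Eventually.of_forall
      (fun x => inner_symGradApp βb x (gradient u x)))
  have hT3 : (∫ x in Ω, divg βb x * ‖gradient u x‖ ^ 2)
      = ∫ x in Ω, ⟪gradient u x, gradient u x⟫ * divg βb x :=
    MeasureTheory.integral_congr_ae (Filter.Eventually.of_forall (fun x => by
      simp only [real_inner_self_eq_norm_sq]; ring))
  rw [hT2, hT3]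
  linarith

end
end

section
/- Composite advection–diffusion bound via the matrix Λ (key inequality in the proof of Theorem 2.4): Let μ > 0, let β̄ ∈ C¹(Ω̄; ℝ^d) with β̄·n = 0 on ∂Ω, let β' : Ω̄ → ℝ^d be bounded and measurable, and let u ∈ C²(Ω̄) with u = 0 on ∂Ω. Then −∫_Ω ((β̄ + β')·∇u) Δu dx ≤ ∫_Ω (Λ ∇u)·∇u dx + ½ μ ∫_Ω |Δu|² dx, where Λ := ∇_S β̄ − ½(∇·β̄) I + ½ μ^{-1} |β'|² I, ∇_S β̄ is the symmetric part of the Jacobian of β̄, and I is the d×d identity matrix. -/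
open MeasureTheory Set
open scoped RealInnerProductSpace

noncomputable section

/-- Action of the matrix Λ = ∇_S β̄ − ½(∇·β̄)I + ½μ⁻¹|β'|² I at `x` on `v`. -/
noncomputable def lamApp {d : ℕ} (μ : ℝ) (βb β' : Euc d → Euc d) (x v : Euc d) : Euc d :=
  symGradApp βb x v - ((1 / 2 : ℝ) * divg βb x) • v + ((1 / 2 : ℝ) * μ⁻¹ * ‖β' x‖ ^ 2) • v

section AuxCalc

variable {d : ℕ}

lemma euc_decomp (w : Euc d) : ∑ i, w i • EuclideanSpace.single i (1:ℝ) = w := by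
  ext j
  have : (∑ i : Fin d, w i • EuclideanSpace.single i (1:ℝ)) j
      = ∑ i : Fin d, (w i • EuclideanSpace.single i (1:ℝ)) j :=
    by rw [WithLp.ofLp_sum]; exact Finset.sum_apply j Finset.univ _
  rw [this]
  simp [EuclideanSpace.single_apply]

lemma diff_coord {F : Euc d → Euc d} {x : Euc d} (hF : DifferentiableAt ℝ F x) (i : Fin d) :
    DifferentiableAt ℝ (fun y => F y i) x := by
  have h : DifferentiableAt ℝ ((EuclideanSpace.proj (𝕜 := ℝ) i : Euc d →L[ℝ] ℝ) ∘ F) x :=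
    (ContinuousLinearMap.differentiableAt _).comp x hF
  exact h

lemma fderiv_coord {F : Euc d → Euc d} {x : Euc d} (hF : DifferentiableAt ℝ F x) (i : Fin d)
    (w : Euc d) : fderiv ℝ (fun y => F y i) x w = (fderiv ℝ F x w) i := by
  have : (fun y => F y i) = (fun v : Euc d => (EuclideanSpace.proj (𝕜 := ℝ) i) v) ∘ F := rfl
  rw [this, fderiv_comp x (ContinuousLinearMap.differentiableAt _) hF]
  simp [ContinuousLinearMap.fderiv]
  rw [show (fun x : Euc d => x.ofLp i) = ⇑(EuclideanSpace.proj (𝕜 := ℝ) i) from rfl,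
    ContinuousLinearMap.fderiv]
  rfl

lemma divg_eq_sum {F : Euc d → Euc d} {x : Euc d} (hF : DifferentiableAt ℝ F x) :
    divg F x = ∑ i, (fderiv ℝ F x (EuclideanSpace.single i 1)) i := by
  unfold divg
  exact Finset.sum_congr rfl fun i _ => fderiv_coord hF i _

lemma divg_sub {F G : Euc d → Euc d} {x : Euc d} (hF : DifferentiableAt ℝ F x)
    (hG : DifferentiableAt ℝ G x) :
    divg (fun y => F y - G y) x = divg F x - divg G x := by
  unfold divg
  rw [← Finset.sum_sub_distrib]
  refine Finset.sum_congr rfl fun i _ => ?_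
  have h1 : (fun y => (F y - G y) i) = fun y => (fun y => F y i) y - (fun y => G y i) y := rfl
  rw [h1, fderiv_fun_sub (diff_coord hF i) (diff_coord hG i)]
  rfl

lemma divg_smul {f : Euc d → ℝ} {G : Euc d → Euc d} {x : Euc d}
    (hf : DifferentiableAt ℝ f x) (hG : DifferentiableAt ℝ G x) :
    divg (fun y => f y • G y) x = fderiv ℝ f x (G x) + f x * divg G x := by
  have key : ∀ i : Fin d, fderiv ℝ (fun y => (f y • G y) i) x (EuclideanSpace.single i 1)
      = f x * fderiv ℝ (fun y => G y i) x (EuclideanSpace.single i 1)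
        + G x i * fderiv ℝ f x (EuclideanSpace.single i 1) := by
    intro i
    rw [show (fun y => (f y • G y) i) = fun y => f y * G y i from rfl,
      fderiv_fun_mul hf (diff_coord hG i)]
    simp [smul_eq_mul]
  have hgx : ∑ i, G x i * fderiv ℝ f x (EuclideanSpace.single i 1) = fderiv ℝ f x (G x) := by
    conv_rhs => rw [← euc_decomp (G x)]
    rw [map_sum]
    exact Finset.sum_congr rfl fun i _ => by simp
  unfold divg
  rw [Finset.sum_congr rfl fun i _ => key i, Finset.sum_add_distrib, ← Finset.mul_sum, hgx]
  ring

lemma fderiv_eq_inner_gradient {f : Euc d → ℝ} {x w : Euc d} :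
    fderiv ℝ f x w = ⟪gradient f x, w⟫ := by
  rw [gradient, InnerProductSpace.toDual_symm_apply]

lemma lapl_eq_divg_gradient (g : Euc d → ℝ) : lapl g = divg (gradient g) := by
  funext x
  unfold lapl divg
  refine Finset.sum_congr rfl fun i _ => ?_
  rw [show (fun y => gradient g y i) = (fun y => fderiv ℝ g y (EuclideanSpace.single i 1)) from
    funext fun y => by
      rw [fderiv_eq_inner_gradient, EuclideanSpace.inner_single_right]
      simp]

lemma contDiff_gradient {u : Euc d → ℝ} (hu : ContDiff ℝ 2 u) : ContDiff ℝ 1 (gradient u) := by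
  have h1 : ContDiff ℝ 1 (fderiv ℝ u) := hu.fderiv_right (by norm_num)
  exact ((InnerProductSpace.toDual ℝ (Euc d)).symm.contDiff).comp h1

lemma fderiv_gradient_apply {u : Euc d → ℝ} (hu : ContDiff ℝ 2 u) (x w z : Euc d) :
    ⟪fderiv ℝ (gradient u) x w, z⟫ = fderiv ℝ (fderiv ℝ u) x w z := by
  have h1 : ContDiff ℝ 1 (fderiv ℝ u) := hu.fderiv_right (by norm_num)
  have hd2 : DifferentiableAt ℝ (fderiv ℝ u) x := (h1.differentiable one_ne_zero) x
  have hdg : DifferentiableAt ℝ (gradient u) x :=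
    ((contDiff_gradient hu).differentiable one_ne_zero) x
  have e1 : ⟪fderiv ℝ (gradient u) x w, z⟫
      = fderiv ℝ (fun y => ⟪gradient u y, (fun _ => z) y⟫) x w := by
    rw [fderiv_inner_apply ℝ hdg (differentiableAt_const z)]
    simp
  rw [e1]
  have e2 : (fun y => ⟪gradient u y, (fun _ => z) y⟫) = fun y => fderiv ℝ u y z :=
    funext fun y => (fderiv_eq_inner_gradient).symm
  rw [e2]
  have e3 : HasFDerivAt (fun y => (ContinuousLinearMap.apply ℝ ℝ z) (fderiv ℝ u y))
      ((ContinuousLinearMap.apply ℝ ℝ z).comp (fderiv ℝ (fderiv ℝ u) x)) x :=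
    (ContinuousLinearMap.apply ℝ ℝ z).hasFDerivAt.comp x hd2.hasFDerivAt
  have e4 : (fun y => fderiv ℝ u y z)
      = fun y => (ContinuousLinearMap.apply ℝ ℝ z) (fderiv ℝ u y) := rfl
  rw [e4, e3.fderiv]
  rfl

lemma hess_symm {u : Euc d → ℝ} (hu : ContDiff ℝ 2 u) (x w z : Euc d) :
    ⟪fderiv ℝ (gradient u) x w, z⟫ = ⟪fderiv ℝ (gradient u) x z, w⟫ := by
  have hdu : Differentiable ℝ u := hu.differentiable two_ne_zero
  have h1 : ContDiff ℝ 1 (fderiv ℝ u) := hu.fderiv_right (by norm_num)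
  have hd2 : DifferentiableAt ℝ (fderiv ℝ u) x := (h1.differentiable one_ne_zero) x
  have hsymm := second_derivative_symmetric (f := u) (f' := fderiv ℝ u)
      (fun y => (hdu y).hasFDerivAt) hd2.hasFDerivAt w z
  rw [fderiv_gradient_apply hu, fderiv_gradient_apply hu]
  exact hsymm

end AuxCalc

section LevelSet

open Metric Filter
open scoped Topology ENNReal

set_option maxHeartbeats 1000000 in
lemma ae_gradient_zero_on_level {d : ℕ} (hd0 : 0 < d) {u : Euc d → ℝ} (hu : ContDiff ℝ 2 u) :
    ∀ᵐ x ∂((volume : Measure (Euc d)).restrict (u ⁻¹' {0})), gradient u x = 0 := by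
  set Z := u ⁻¹' {0} with hZdef
  have hZm : MeasurableSet Z := (isClosed_singleton.preimage hu.continuous).measurableSet
  have hdens := Besicovitch.ae_tendsto_measure_inter_div_of_measurableSet
    (volume : Measure (Euc d)) hZm
  filter_upwards [ae_restrict_of_ae hdens, ae_restrict_mem hZm] with x hx hxZ
  have hx1 : Tendsto (fun r => volume (Z ∩ closedBall x r) / volume (closedBall x r))
      (𝓝[>] (0:ℝ)) (𝓝 1) := by
    have : Z.indicator (1 : Euc d → ℝ≥0∞) x = 1 := by
      rw [Set.indicator_of_mem hxZ]; rfl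
    rwa [this] at hx
  by_contra hg
  set g := gradient u x with hgdef
  set c : ℝ := ‖g‖ with hc
  have hcpos : 0 < c := norm_pos_iff.mpr hg
  set w : Euc d := c⁻¹ • g with hwdef
  have hux : u x = 0 := hxZ
  have hder : HasFDerivAt u (fderiv ℝ u x) x :=
    ((hu.differentiable two_ne_zero) x).hasFDerivAt
  have hlo := hder.isLittleO
  have hev := hlo.def (show (0:ℝ) < c/8 by positivity)
  rw [Metric.eventually_nhds_iff] at hev
  obtain ⟨δ, hδpos, hδ⟩ := hev
  set ρ : ℝ := (8 : ℝ)⁻¹ ^ d with hρdef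
  have hρpos : 0 < ρ := by positivity
  have hρlt : ρ < 1 := by
    calc ρ ≤ (8:ℝ)⁻¹ ^ 1 := by
          apply pow_le_pow_of_le_one (by norm_num) (by norm_num) hd0
      _ < 1 := by norm_num
  set κ : ℝ≥0∞ := ENNReal.ofReal (1 - ρ) with hκdef
  have hκlt : κ < 1 := by
    rw [hκdef, ← ENNReal.ofReal_one]
    exact ENNReal.ofReal_lt_ofReal_iff_of_nonneg (by linarith) |>.mpr (by linarith)
  have hev1 : ∀ᶠ r in 𝓝[>] (0:ℝ),
      κ < volume (Z ∩ closedBall x r) / volume (closedBall x r) :=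
    hx1.eventually (lt_mem_nhds hκlt)
  have hev2 : ∀ᶠ r in 𝓝[>] (0:ℝ), r < δ :=
    Filter.Eventually.filter_mono nhdsWithin_le_nhds (gt_mem_nhds hδpos)
  have hev3 : ∀ᶠ r in 𝓝[>] (0:ℝ), (0:ℝ) < r := eventually_mem_nhdsWithin
  obtain ⟨r, hκr, hrδ, hrpos⟩ := (hev1.and (hev2.and hev3)).exists
  set s : ℝ := r / 2 with hsdef
  have hspos : 0 < s := by positivity
  set B := closedBall x r with hBdef
  set B' := closedBall (x + s • w) (s/4) with hB'def
  have hwnorm : ‖w‖ = 1 := by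
    rw [hwdef, norm_smul, norm_inv, Real.norm_eq_abs, abs_of_pos hcpos, ← hc]
    field_simp
  have hswnorm : ‖s • w‖ = s := by
    rw [norm_smul, Real.norm_eq_abs, abs_of_pos hspos, hwnorm, mul_one]
  have hB'B : B' ⊆ B := by
    intro y hy
    rw [hB'def, mem_closedBall, dist_eq_norm] at hy
    rw [hBdef, mem_closedBall, dist_eq_norm]
    have : y - x = (y - (x + s • w)) + s • w := by abel
    rw [this]
    calc ‖(y - (x + s • w)) + s • w‖ ≤ ‖y - (x + s • w)‖ + ‖s • w‖ := norm_add_le _ _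
      _ ≤ s/4 + s := by rw [hswnorm]; exact add_le_add_left hy _
      _ ≤ r := by rw [hsdef]; linarith
  have hZB' : (Z ∩ B').Nonempty := by
    rw [Set.nonempty_iff_ne_empty]
    intro hemp
    have hBpos : 0 < volume B := measure_closedBall_pos _ _ hrpos
    have hBfin : volume B < ⊤ := measure_closedBall_lt_top
    have hmB' : volume B' = ENNReal.ofReal ρ * volume B := by
      rw [hB'def, hBdef, Measure.addHaar_closedBall _ _ (by positivity : (0:ℝ) ≤ s/4),
        Measure.addHaar_closedBall _ _ hrpos.le, ← mul_assoc,
        ← ENNReal.ofReal_mul hρpos.le]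
      congr 2
      rw [finrank_euclideanSpace_fin]
      have : s / 4 = 8⁻¹ * r := by rw [hsdef]; ring
      rw [this, mul_pow, hρdef]
    have hdisj : Disjoint (Z ∩ B) B' := by
      rw [Set.disjoint_left]
      intro y hy hyB'
      have : y ∈ Z ∩ B' := ⟨hy.1, hyB'⟩
      rw [hemp] at this
      exact this
    have hle : volume (Z ∩ B) + volume B' ≤ volume B := by
      rw [← measure_union hdisj measurableSet_closedBall]
      exact measure_mono (Set.union_subset Set.inter_subset_right hB'B)
    have hgt : κ * volume B < volume (Z ∩ B) :=
      (ENNReal.lt_div_iff_mul_lt (Or.inl hBpos.ne') (Or.inl hBfin.ne)).mp hκr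
    have hB'fin : volume B' ≠ ⊤ := measure_closedBall_lt_top.ne
    have h2 : κ * volume B + volume B' < volume (Z ∩ B) + volume B' :=
      ENNReal.add_lt_add_right hB'fin hgt
    have h3 : κ * volume B + volume B' < volume B := lt_of_lt_of_le h2 hle
    rw [hmB', ← add_mul, hκdef, ← ENNReal.ofReal_add (by linarith) hρpos.le] at h3
    have : (1 - ρ) + ρ = 1 := by ring
    rw [this, ENNReal.ofReal_one, one_mul] at h3
    exact lt_irrefl _ h3
  obtain ⟨y, hyZ, hyB'⟩ := hZB'
  have hyx' : ‖y - (x + s • w)‖ ≤ s/4 := by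
    rw [hB'def, mem_closedBall, dist_eq_norm] at hyB'
    exact hyB'
  have hyx : ‖y - x‖ ≤ 2 * s := by
    have : y - x = (y - (x + s • w)) + s • w := by abel
    rw [this]
    calc ‖(y - (x + s • w)) + s • w‖ ≤ ‖y - (x + s • w)‖ + ‖s • w‖ := norm_add_le _ _
      _ ≤ s/4 + s := by rw [hswnorm]; exact add_le_add_left hyx' _
      _ ≤ 2 * s := by linarith
  have hdist : dist y x < δ := by
    rw [dist_eq_norm]
    calc ‖y - x‖ ≤ 2 * s := hyx
      _ = r := by rw [hsdef]; ring
      _ < δ := hrδ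
  have happ := hδ hdist
  have huy : u y = 0 := hyZ
  rw [huy, hux] at happ
  have happ' : |fderiv ℝ u x (y - x)| ≤ c/8 * ‖y - x‖ := by
    have e0 : (0:ℝ) - 0 - fderiv ℝ u x (y - x) = -(fderiv ℝ u x (y - x)) := by ring
    rw [e0, norm_neg, Real.norm_eq_abs] at happ
    exact happ
  have hLy : fderiv ℝ u x (y - x) = ⟪g, y - x⟫ := fderiv_eq_inner_gradient
  have hinw : ⟪g, w⟫ = c := by
    rw [hwdef, real_inner_smul_right, real_inner_self_eq_norm_sq, ← hc]
    field_simp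
  have hsplit : ⟪g, y - x⟫ = s * c + ⟪g, y - (x + s • w)⟫ := by
    have : y - x = s • w + (y - (x + s • w)) := by abel
    rw [this, inner_add_right, real_inner_smul_right, hinw]
  have hrem : |⟪g, y - (x + s • w)⟫| ≤ c * (s/4) := by
    calc |⟪g, y - (x + s • w)⟫| ≤ ‖g‖ * ‖y - (x + s • w)‖ := abs_real_inner_le_norm _ _
      _ ≤ c * (s/4) := by rw [← hc]; exact mul_le_mul_of_nonneg_left hyx' hcpos.le
  rw [hLy, hsplit] at happ'
  have hub : c/8 * ‖y - x‖ ≤ c/8 * (2*s) := mul_le_mul_of_nonneg_left hyx (by positivity)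
  have h1 := abs_le.mp happ'
  have h2 := abs_le.mp hrem
  have hcs : 0 < c * s := mul_pos hcpos hspos
  nlinarith [h1.2, h2.1, hub, hcs]

end LevelSet

section Young

lemma young_ineq {μ p nb nv t : ℝ} (hμ : 0 < μ) (h : |p| ≤ nb * nv) (hnb : 0 ≤ nb)
    (hnv : 0 ≤ nv) :
    -(p * t) ≤ 1/2 * μ⁻¹ * nb^2 * nv^2 + 1/2 * μ * t^2 := by
  have h1 : -(p * t) ≤ nb * nv * |t| := by
    calc -(p * t) ≤ |-(p * t)| := le_abs_self _
      _ = |p| * |t| := by rw [abs_neg, abs_mul]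
      _ ≤ nb * nv * |t| := mul_le_mul_of_nonneg_right h (abs_nonneg t)
  have h2 : μ * (nb * nv * |t|) ≤ 1/2 * nb^2 * nv^2 + 1/2 * μ^2 * t^2 := by
    nlinarith [sq_nonneg (nb * nv - μ * |t|), sq_abs t]
  have h3 : nb * nv * |t| ≤ μ⁻¹ * (1/2 * nb^2 * nv^2 + 1/2 * μ^2 * t^2) := by
    rw [← inv_mul_cancel_left₀ hμ.ne' (nb * nv * |t|)]
    exact mul_le_mul_of_nonneg_left h2 (by positivity)
  have h4 : μ⁻¹ * (1/2 * nb^2 * nv^2 + 1/2 * μ^2 * t^2)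
      = 1/2 * μ⁻¹ * nb^2 * nv^2 + 1/2 * μ * t^2 := by
    field_simp
  linarith [h1, h3.trans_eq h4]

end Young

set_option maxHeartbeats 4000000 in
/-- composite advection–diffusion bound via the matrix Λ, key inequality
in the proof of Theorem 2.4: on a bounded open (Lipschitz) domain Ω ⊂ ℝ^d (d = 2,3) for
which the divergence theorem holds, if μ > 0, β̄ ∈ C¹ with β̄·n = 0 on ∂Ω, β' is bounded
and measurable and u ∈ C² with u = 0 on ∂Ω, then
−∫_Ω ((β̄+β')·∇u) Δu dx ≤ ∫_Ω (Λ∇u)·∇u dx + ½μ∫_Ω |Δu|² dx. -/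
theorem composite_advection_diffusion_bound
    (d : ℕ) (hd : d = 2 ∨ d = 3) (Ω : Set (Euc d))
    (hΩo : IsOpen Ω) (hΩb : Bornology.IsBounded Ω) (hΩne : Ω.Nonempty)
    (n : Euc d → Euc d) (hn : ∀ x ∈ frontier Ω, ‖n x‖ = 1)
    (σ : Measure (Euc d))
    -- the divergence theorem holds on Ω
    (hdivthm : ∀ F : Euc d → Euc d, ContDiff ℝ 1 F →
      (∫ x in Ω, divg F x) = ∫ x in frontier Ω, ⟪F x, n x⟫ ∂σ)
    (μ : ℝ) (hμ : 0 < μ)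
    (βb : Euc d → Euc d) (hβb : ContDiff ℝ 1 βb)
    (hβbn : ∀ x ∈ frontier Ω, ⟪βb x, n x⟫ = 0)
    (β' : Euc d → Euc d) (hβ'meas : Measurable β') (hβ'bdd : ∃ M : ℝ, ∀ x, ‖β' x‖ ≤ M)
    (u : Euc d → ℝ) (hu : ContDiff ℝ 2 u)
    (hubc : ∀ x ∈ frontier Ω, u x = 0) :
    -(∫ x in Ω, ⟪βb x + β' x, gradient u x⟫ * lapl u x) ≤
      (∫ x in Ω, ⟪lamApp μ βb β' x (gradient u x), gradient u x⟫) +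
        (1 / 2 : ℝ) * μ * ∫ x in Ω, (lapl u x) ^ 2 := by
  -- ===== setup =====
  have hd0 : 0 < d := by rcases hd with h | h <;> omega
  set v : Euc d → Euc d := gradient u with hvdef
  have hv : ContDiff ℝ 1 v := contDiff_gradient hu
  have hvd : Differentiable ℝ v := hv.differentiable one_ne_zero
  have hβbd : Differentiable ℝ βb := hβb.differentiable one_ne_zero
  have hud : Differentiable ℝ u := hu.differentiable two_ne_zero
  set a : Euc d → ℝ := fun x => ⟪βb x, v x⟫ with hadef
  set q : Euc d → ℝ := fun x => ⟪v x, v x⟫ with hqdef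
  have ha1 : ContDiff ℝ 1 a := ContDiff.inner ℝ hβb hv
  have hq1 : ContDiff ℝ 1 q := ContDiff.inner ℝ hv hv
  have had : Differentiable ℝ a := ha1.differentiable one_ne_zero
  have hqd : Differentiable ℝ q := hq1.differentiable one_ne_zero
  set P : Euc d → ℝ := fun x => ⟪fderiv ℝ βb x (v x), v x⟫ with hPdef
  set W : Euc d → ℝ := fun x => 2 * ⟪fderiv ℝ v x (βb x), v x⟫ + q x * divg βb x with hWdef
  set DE : Euc d → ℝ := fun x => P x + a x * lapl u x - 1/2 * (q x * divg βb x) with hDEdef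
  set Df : Euc d → ℝ := fun x => DE x - 1/2 * W x with hDfdef
  set E : Euc d → Euc d := fun y => a y • v y - (1/2 * q y) • βb y with hEdef
  set Q : Euc d → Euc d := fun y => q y • βb y with hQdef
  have hE1 : ContDiff ℝ 1 E := (ha1.smul hv).sub ((contDiff_const.mul hq1).smul hβb)
  have hQ1 : ContDiff ℝ 1 Q := hq1.smul hβb
  -- ===== pointwise derivative formulas =====
  have hdivv : ∀ x, divg v x = lapl u x := fun x => by rw [lapl_eq_divg_gradient u, hvdef]
  have hfq : ∀ x w, fderiv ℝ q x w = 2 * ⟪fderiv ℝ v x w, v x⟫ := by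
    intro x w
    rw [hqdef, fderiv_inner_apply ℝ (hvd x) (hvd x) w,
      real_inner_comm (fderiv ℝ v x w) (v x)]
    ring
  have hfa : ∀ x w, fderiv ℝ a x w = ⟪fderiv ℝ βb x w, v x⟫ + ⟪βb x, fderiv ℝ v x w⟫ := by
    intro x w
    rw [hadef, fderiv_inner_apply ℝ (hβbd x) (hvd x) w]
    ring
  have hdivE : ∀ x, divg E x = DE x := by
    intro x
    have hF1 : DifferentiableAt ℝ (fun y => a y • v y) x := (had x).smul (hvd x)
    have hF2 : DifferentiableAt ℝ (fun y => (1/2 * q y) • βb y) x :=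
      ((hqd.const_mul (1/2 : ℝ)) x).smul (hβbd x)
    have e0 : divg E x = divg (fun y => a y • v y) x - divg (fun y => (1/2 * q y) • βb y) x :=
      divg_sub hF1 hF2
    have e1 : divg (fun y => a y • v y) x = fderiv ℝ a x (v x) + a x * divg v x :=
      divg_smul (had x) (hvd x)
    have e2 : divg (fun y => (1/2 * q y) • βb y) x
        = fderiv ℝ (fun y => 1/2 * q y) x (βb x) + (1/2 * q x) * divg βb x :=
      divg_smul ((hqd.const_mul (1/2 : ℝ)) x) (hβbd x)
    have e3 : fderiv ℝ (fun y => 1/2 * q y) x (βb x) = 1/2 * fderiv ℝ q x (βb x) := by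
      rw [fderiv_const_mul (hqd x)]
      rfl
    have e4 : ⟪βb x, fderiv ℝ v x (v x)⟫ = ⟪fderiv ℝ v x (βb x), v x⟫ := by
      rw [real_inner_comm (fderiv ℝ v x (v x)) (βb x)]
      rw [hvdef]
      exact hess_symm hu x (gradient u x) (βb x)
    rw [e0, e1, e2, e3, hfa x (v x), e4, hfq x (βb x), hdivv x, hDEdef, hPdef]
    ring
  have hdivQ : ∀ x, divg Q x = W x := by
    intro x
    have e1 : divg Q x = fderiv ℝ q x (βb x) + q x * divg βb x := divg_smul (hqd x) (hβbd x)
    rw [e1, hfq x (βb x), hWdef]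
  have hcomp : ∀ (ψ : ℝ → ℝ), ContDiff ℝ 1 ψ → ∀ x (w : Euc d),
      fderiv ℝ (fun y => ψ (u y)) x w = deriv ψ (u x) * ⟪v x, w⟫ := by
    intro ψ hψ x w
    have h1 : HasFDerivAt (fun y => ψ (u y))
        ((fderiv ℝ ψ (u x)).comp (fderiv ℝ u x)) x :=
      ((hψ.differentiable one_ne_zero (u x)).hasFDerivAt).comp x (hud x).hasFDerivAt
    rw [h1.fderiv]
    simp only [ContinuousLinearMap.coe_comp', Function.comp_apply]
    have h2 : fderiv ℝ ψ (u x) (fderiv ℝ u x w) = fderiv ℝ u x w * deriv ψ (u x) := by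
      calc fderiv ℝ ψ (u x) (fderiv ℝ u x w)
          = fderiv ℝ ψ (u x) ((fderiv ℝ u x w) • (1:ℝ)) := by rw [smul_eq_mul, mul_one]
        _ = (fderiv ℝ u x w) • (fderiv ℝ ψ (u x) (1:ℝ)) := ContinuousLinearMap.map_smul _ _ _
        _ = fderiv ℝ u x w * deriv ψ (u x) := by rw [smul_eq_mul, fderiv_apply_one_eq_deriv]
    rw [h2]
    have h3 : fderiv ℝ u x w = ⟪v x, w⟫ := by rw [hvdef]; exact fderiv_eq_inner_gradient
    rw [h3]
    ring
  -- ===== divergence theorem applications =====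
  have hfrm : MeasurableSet (frontier Ω) := isClosed_frontier.measurableSet
  have hInt0 : ∀ F : Euc d → Euc d, ContDiff ℝ 1 F →
      (∀ x ∈ frontier Ω, ⟪F x, n x⟫ = 0) → (∫ x in Ω, divg F x) = 0 := by
    intro F hF hFb
    rw [hdivthm F hF]
    rw [setIntegral_congr_fun hfrm (fun x hx => hFb x hx : EqOn (fun x => ⟪F x, n x⟫)
      (fun _ => (0:ℝ)) (frontier Ω))]
    simp
  have hK : IsCompact (closure Ω) := hΩb.isCompact_closure
  have hci : ∀ {f : Euc d → ℝ}, Continuous f → IntegrableOn f Ω volume := by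
    intro f hf
    exact ((hf.continuousOn).integrableOn_compact hK).mono_set subset_closure
  -- ===== continuity =====
  have hvc : Continuous v := hv.continuous
  have hβbc : Continuous βb := hβb.continuous
  have hfvc : Continuous (fderiv ℝ v) := hv.continuous_fderiv one_ne_zero
  have hfβc : Continuous (fderiv ℝ βb) := hβb.continuous_fderiv one_ne_zero
  have hac : Continuous a := ha1.continuous
  have hqc : Continuous q := hq1.continuous
  have hdivβc : Continuous (fun x => divg βb x) := by
    have e : (fun x => divg βb x) = fun x => ∑ i, (fderiv ℝ βb x (EuclideanSpace.single i 1)) i :=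
      funext fun x => divg_eq_sum (hβbd x)
    rw [e]
    refine continuous_finset_sum _ fun i _ => ?_
    exact ((EuclideanSpace.proj (𝕜 := ℝ) i : Euc d →L[ℝ] ℝ).continuous).comp
      (hfβc.clm_apply continuous_const)
  have hΔc : Continuous (fun x => lapl u x) := by
    have e : (fun x => lapl u x) = fun x => ∑ i, (fderiv ℝ v x (EuclideanSpace.single i 1)) i := by
      funext x
      rw [← hdivv x]
      exact divg_eq_sum (hvd x)
    rw [e]
    refine continuous_finset_sum _ fun i _ => ?_
    exact ((EuclideanSpace.proj (𝕜 := ℝ) i : Euc d →L[ℝ] ℝ).continuous).comp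
      (hfvc.clm_apply continuous_const)
  have hPc : Continuous P := Continuous.inner (hfβc.clm_apply hvc) hvc
  have hWc : Continuous W :=
    (continuous_const.mul (Continuous.inner (hfvc.clm_apply hβbc) hvc)).add (hqc.mul hdivβc)
  have hDEc : Continuous DE :=
    (hPc.add (hac.mul hΔc)).sub (continuous_const.mul (hqc.mul hdivβc))
  have hDfc : Continuous Df := hDEc.sub (continuous_const.mul hWc)
  -- ===== key integral identities =====
  have keyA : ∀ ψ : ℝ → ℝ, ContDiff ℝ 1 ψ → ψ 0 = 0 →
      (∫ x in Ω, (1/2 * (deriv ψ (u x) * (a x * q x)) + ψ (u x) * DE x)) = 0 := by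
    intro ψ hψ hψ0
    have hF1 : ContDiff ℝ 1 (fun y => ψ (u y) • E y) :=
      (hψ.comp (hu.of_le one_le_two)).smul hE1
    have hFb : ∀ x ∈ frontier Ω, ⟪ψ (u x) • E x, n x⟫ = 0 := by
      intro x hx
      rw [real_inner_smul_left, hubc x hx, hψ0, zero_mul]
    have h0 := hInt0 _ hF1 hFb
    have hptw : ∀ x, divg (fun y => ψ (u y) • E y) x
        = 1/2 * (deriv ψ (u x) * (a x * q x)) + ψ (u x) * DE x := by
      intro x
      have hψud : DifferentiableAt ℝ (fun y => ψ (u y)) x :=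
        ((hψ.differentiable one_ne_zero) (u x)).comp x (hud x)
      have hEd : DifferentiableAt ℝ E x := (hE1.differentiable one_ne_zero) x
      rw [divg_smul hψud hEd, hcomp ψ hψ x (E x), hdivE x]
      have hvE : ⟪v x, E x⟫ = 1/2 * (a x * q x) := by
        rw [hEdef]
        simp only [inner_sub_right, real_inner_smul_right]
        rw [real_inner_comm (βb x) (v x), hadef, hqdef]
        ring
      rw [hvE]
      ring
    calc (∫ x in Ω, (1/2 * (deriv ψ (u x) * (a x * q x)) + ψ (u x) * DE x))
        = ∫ x in Ω, divg (fun y => ψ (u y) • E y) x :=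
          integral_congr_ae (Filter.Eventually.of_forall fun x => (hptw x).symm)
      _ = 0 := h0
  have keyB : ∀ ψ : ℝ → ℝ, ContDiff ℝ 1 ψ →
      (∫ x in Ω, (deriv ψ (u x) * (a x * q x) + ψ (u x) * W x)) = 0 := by
    intro ψ hψ
    have hF1 : ContDiff ℝ 1 (fun y => ψ (u y) • Q y) :=
      (hψ.comp (hu.of_le one_le_two)).smul hQ1
    have hFb : ∀ x ∈ frontier Ω, ⟪ψ (u x) • Q x, n x⟫ = 0 := by
      intro x hx
      rw [real_inner_smul_left]
      have e : ⟪Q x, n x⟫ = q x * ⟪βb x, n x⟫ := by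
        rw [hQdef]
        exact real_inner_smul_left _ _ _
      rw [e, hβbn x hx, mul_zero, mul_zero]
    have h0 := hInt0 _ hF1 hFb
    have hptw : ∀ x, divg (fun y => ψ (u y) • Q y) x
        = deriv ψ (u x) * (a x * q x) + ψ (u x) * W x := by
      intro x
      have hψud : DifferentiableAt ℝ (fun y => ψ (u y)) x :=
        ((hψ.differentiable one_ne_zero) (u x)).comp x (hud x)
      have hQd : DifferentiableAt ℝ Q x := (hQ1.differentiable one_ne_zero) x
      rw [divg_smul hψud hQd, hcomp ψ hψ x (Q x), hdivQ x]
      have hvQ : ⟪v x, Q x⟫ = a x * q x := by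
        rw [hQdef]
        simp only [real_inner_smul_right]
        rw [real_inner_comm (βb x) (v x), hadef, hqdef]
        ring
      rw [hvQ]
    calc (∫ x in Ω, (deriv ψ (u x) * (a x * q x) + ψ (u x) * W x))
        = ∫ x in Ω, divg (fun y => ψ (u y) • Q y) x :=
          integral_congr_ae (Filter.Eventually.of_forall fun x => (hptw x).symm)
      _ = 0 := h0
  have keyW : (∫ x in Ω, W x) = 0 := by
    have h := keyB (fun _ => (1:ℝ)) contDiff_const
    have e : (fun x => deriv (fun _ : ℝ => (1:ℝ)) (u x) * (a x * q x) + (1:ℝ) * W x)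
        = fun x => W x := by
      funext x
      simp
    rw [show (∫ x in Ω, (deriv (fun _ : ℝ => (1:ℝ)) (u x) * (a x * q x) + (1:ℝ) * W x))
        = ∫ x in Ω, W x from integral_congr_ae (Filter.Eventually.of_forall fun x => by simp)]
      at h
    exact h
  have keyD : ∀ ψ : ℝ → ℝ, ContDiff ℝ 1 ψ → ψ 0 = 0 →
      (∫ x in Ω, ψ (u x) * Df x) = 0 := by
    intro ψ hψ hψ0
    have hψuc : Continuous fun x => ψ (u x) := (hψ.continuous).comp hu.continuous
    have hdψuc : Continuous fun x => deriv ψ (u x) :=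
      (hψ.continuous_deriv le_rfl).comp hu.continuous
    have i1 : IntegrableOn (fun x => deriv ψ (u x) * (a x * q x)) Ω volume :=
      hci (hdψuc.mul (hac.mul hqc))
    have i2 : IntegrableOn (fun x => ψ (u x) * DE x) Ω volume := hci (hψuc.mul hDEc)
    have i3 : IntegrableOn (fun x => ψ (u x) * W x) Ω volume := hci (hψuc.mul hWc)
    have hA := keyA ψ hψ hψ0
    have hB := keyB ψ hψ
    have eA : (∫ x in Ω, (1/2 * (deriv ψ (u x) * (a x * q x)) + ψ (u x) * DE x))
        = 1/2 * (∫ x in Ω, deriv ψ (u x) * (a x * q x)) + ∫ x in Ω, ψ (u x) * DE x := by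
      rw [integral_add (i1.const_mul (1/2)) i2, integral_const_mul]
    have eB : (∫ x in Ω, (deriv ψ (u x) * (a x * q x) + ψ (u x) * W x))
        = (∫ x in Ω, deriv ψ (u x) * (a x * q x)) + ∫ x in Ω, ψ (u x) * W x := by
      rw [integral_add i1 i3]
    have eD : (∫ x in Ω, ψ (u x) * Df x)
        = (∫ x in Ω, ψ (u x) * DE x) - 1/2 * ∫ x in Ω, ψ (u x) * W x := by
      rw [show (∫ x in Ω, ψ (u x) * Df x)
          = ∫ x in Ω, (ψ (u x) * DE x - 1/2 * (ψ (u x) * W x)) from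
        integral_congr_ae (Filter.Eventually.of_forall fun x => by rw [hDfdef]; ring)]
      rw [integral_sub i2 (i3.const_mul (1/2)), integral_const_mul]
    rw [eA] at hA
    rw [eB] at hB
    rw [eD]
    linarith
  -- ===== behaviour on the zero set of the gradient =====
  have hDf0 : ∀ x, v x = 0 → Df x = 0 := by
    intro x hvx
    have hax : a x = 0 := by simp only [hadef]; simp [hvx]
    have hqx : q x = 0 := by simp only [hqdef]; simp [hvx]
    have hPx : P x = 0 := by simp only [hPdef]; simp [hvx]
    have hWx : W x = 0 := by simp only [hWdef]; simp [hvx, hqx]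
    simp only [hDfdef, hDEdef, hax, hqx, hPx, hWx]
    ring
  have hZm : MeasurableSet (u ⁻¹' {0}) :=
    (isClosed_singleton.preimage hu.continuous).measurableSet
  have hgrad_ae : ∀ᵐ x ∂(volume.restrict Ω), (u x = 0 → Df x = 0) := by
    have h1 := ae_gradient_zero_on_level hd0 hu
    have h2 : ∀ᵐ x ∂(volume : Measure (Euc d)), x ∈ u ⁻¹' {0} → gradient u x = 0 :=
      (ae_restrict_iff' hZm).mp h1
    have h3 : ∀ᵐ x ∂((volume : Measure (Euc d)).restrict Ω),
        x ∈ u ⁻¹' {0} → gradient u x = 0 := ae_restrict_of_ae h2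
    filter_upwards [h3] with x hx hux
    exact hDf0 x (hx (by simp [hux]))
  -- ===== approximation sequence =====
  set ψk : ℕ → ℝ → ℝ := fun k t => ((k:ℝ) * t^2) / (1 + (k:ℝ) * t^2) with hψkdef
  have hden : ∀ (k : ℕ) (t : ℝ), 0 < 1 + (k:ℝ) * t^2 := by
    intro k t
    positivity
  have hψkC : ∀ k, ContDiff ℝ 1 (ψk k) := by
    intro k
    apply ContDiff.div
    · exact contDiff_const.mul (contDiff_id.pow 2)
    · exact contDiff_const.add (contDiff_const.mul (contDiff_id.pow 2))
    · intro t
      exact (hden k t).ne'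
  have hψk0 : ∀ k, ψk k 0 = 0 := by
    intro k
    simp [hψkdef]
  have hψkabs : ∀ k t, |ψk k t| ≤ 1 := by
    intro k t
    rw [hψkdef]
    simp only []
    rw [abs_div, abs_of_nonneg (by positivity : (0:ℝ) ≤ (k:ℝ) * t^2),
      abs_of_pos (hden k t), div_le_one (hden k t)]
    linarith
  have hψklim : ∀ t : ℝ, t ≠ 0 →
      Filter.Tendsto (fun k : ℕ => ψk k t) Filter.atTop (nhds 1) := by
    intro t ht
    have ht2 : 0 < t^2 := by positivity
    have h1 : Filter.Tendsto (fun k : ℕ => 1 + (k:ℝ) * t^2) Filter.atTop Filter.atTop := by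
      apply Filter.tendsto_atTop_add_const_left
      exact Filter.Tendsto.atTop_mul_const ht2 tendsto_natCast_atTop_atTop
    have h2 : Filter.Tendsto (fun k : ℕ => (1 + (k:ℝ) * t^2)⁻¹) Filter.atTop (nhds 0) :=
      h1.inv_tendsto_atTop
    have h3 : Filter.Tendsto (fun k : ℕ => 1 - (1 + (k:ℝ) * t^2)⁻¹) Filter.atTop
        (nhds (1 - 0)) := Filter.Tendsto.sub tendsto_const_nhds h2
    rw [sub_zero] at h3
    apply h3.congr
    intro k
    rw [hψkdef]
    have := (hden k t).ne'
    field_simp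
    ring
  -- ===== dominated convergence =====
  have hbound : Integrable (fun x => |Df x|) (volume.restrict Ω) :=
    hci (continuous_abs.comp hDfc)
  have hgZ : (∫ x in Ω, (if u x = 0 then (0:ℝ) else Df x)) = 0 := by
    have hFmeas : ∀ k : ℕ, AEStronglyMeasurable (fun x => ψk k (u x) * Df x)
        (volume.restrict Ω) :=
      fun k => (((hψkC k).continuous.comp hu.continuous).mul hDfc).aestronglyMeasurable
    have hbd : ∀ k : ℕ, ∀ᵐ x ∂(volume.restrict Ω), ‖ψk k (u x) * Df x‖ ≤ |Df x| := by
      intro k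
      apply Filter.Eventually.of_forall
      intro x
      rw [Real.norm_eq_abs, abs_mul]
      calc |ψk k (u x)| * |Df x| ≤ 1 * |Df x| :=
            mul_le_mul_of_nonneg_right (hψkabs k (u x)) (abs_nonneg _)
        _ = |Df x| := one_mul _
    have hptw : ∀ᵐ x ∂(volume.restrict Ω), Filter.Tendsto (fun k : ℕ => ψk k (u x) * Df x)
        Filter.atTop (nhds (if u x = 0 then (0:ℝ) else Df x)) := by
      apply Filter.Eventually.of_forall
      intro x
      by_cases hx : u x = 0
      · rw [if_pos hx]
        have e : (fun k : ℕ => ψk k (u x) * Df x) = fun _ => 0 :=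
          funext fun k => by rw [hx, hψk0 k, zero_mul]
        rw [e]
        exact tendsto_const_nhds
      · rw [if_neg hx]
        have h := (hψklim (u x) hx).mul_const (Df x)
        rw [one_mul] at h
        exact h
    have hTend := MeasureTheory.tendsto_integral_of_dominated_convergence _
      hFmeas hbound hbd hptw
    have hzero : (fun k : ℕ => ∫ x in Ω, ψk k (u x) * Df x) = fun _ => (0:ℝ) :=
      funext fun k => keyD (ψk k) (hψkC k) (hψk0 k)
    rw [hzero] at hTend
    exact (tendsto_nhds_unique hTend tendsto_const_nhds)
  have hmeasU : MeasurableSet {x : Euc d | u x = 0} :=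
    (isClosed_eq hu.continuous continuous_const).measurableSet
  have hZero2 : (∫ x in Ω, (if u x = 0 then Df x else (0:ℝ))) = 0 := by
    have hae : (fun x => if u x = 0 then Df x else (0:ℝ))
        =ᵐ[volume.restrict Ω] (fun _ => (0:ℝ)) := by
      filter_upwards [hgrad_ae] with x hx
      by_cases h : u x = 0
      · simp [h, hx h]
      · simp [h]
    rw [integral_congr_ae hae]
    simp
  have hDf_int : (∫ x in Ω, Df x) = 0 := by
    have if1 : Integrable (fun x => if u x = 0 then (0:ℝ) else Df x) (volume.restrict Ω) := by
      apply Integrable.mono' hbound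
      · exact (Measurable.ite hmeasU measurable_const hDfc.measurable).aestronglyMeasurable
      · apply Filter.Eventually.of_forall
        intro x
        by_cases h : u x = 0 <;> simp [h, le_abs_self, abs_nonneg]
    have if2 : Integrable (fun x => if u x = 0 then Df x else (0:ℝ)) (volume.restrict Ω) := by
      apply Integrable.mono' hbound
      · exact (Measurable.ite hmeasU hDfc.measurable measurable_const).aestronglyMeasurable
      · apply Filter.Eventually.of_forall
        intro x
        by_cases h : u x = 0 <;> simp [h, le_abs_self, abs_nonneg]
    have e : (∫ x in Ω, Df x)
        = ∫ x in Ω, ((if u x = 0 then (0:ℝ) else Df x) + (if u x = 0 then Df x else (0:ℝ))) :=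
      integral_congr_ae (Filter.Eventually.of_forall fun x => by
        by_cases h : u x = 0 <;> simp [h])
    rw [e, integral_add if1 if2, hgZ, hZero2]
    norm_num
  have hIDE : (∫ x in Ω, DE x) = 0 := by
    have e : (∫ x in Ω, DE x) = ∫ x in Ω, (Df x + 1/2 * W x) :=
      integral_congr_ae (Filter.Eventually.of_forall fun x => by rw [hDfdef]; ring)
    rw [e, integral_add (hci hDfc) ((hci hWc).const_mul (1/2)), hDf_int, integral_const_mul,
      keyW]
    norm_num
  -- ===== final assembly =====
  have hlam : ∀ x, ⟪lamApp μ βb β' x (v x), v x⟫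
      = P x - 1/2 * (q x * divg βb x) + 1/2 * μ⁻¹ * ‖β' x‖^2 * q x := by
    intro x
    rw [lamApp, symGradApp]
    rw [inner_add_left, inner_sub_left, real_inner_smul_left, real_inner_smul_left,
      real_inner_smul_left, inner_add_left, ContinuousLinearMap.adjoint_inner_left,
      real_inner_comm (fderiv ℝ βb x (v x)) (v x)]
    rw [hPdef, hqdef]
    ring
  obtain ⟨M, hM⟩ := hβ'bdd
  have hβ'm : Measurable fun x => ⟪β' x, v x⟫ :=
    Measurable.inner (𝕜 := ℝ) hβ'meas hvc.measurable
  have hi_bv : Integrable (fun x => ⟪β' x, v x⟫ * lapl u x) (volume.restrict Ω) := by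
    apply Integrable.mono' (hci (continuous_const.mul (hvc.norm.mul (continuous_abs.comp hΔc))))
    · exact (hβ'm.mul hΔc.measurable).aestronglyMeasurable
    · apply Filter.Eventually.of_forall
      intro x
      rw [Real.norm_eq_abs, abs_mul]
      calc |⟪β' x, v x⟫| * |lapl u x|
          ≤ (‖β' x‖ * ‖v x‖) * |lapl u x| :=
            mul_le_mul_of_nonneg_right (abs_real_inner_le_norm _ _) (abs_nonneg _)
        _ ≤ (M * ‖v x‖) * |lapl u x| :=
            mul_le_mul_of_nonneg_right
              (mul_le_mul_of_nonneg_right (hM x) (norm_nonneg _)) (abs_nonneg _)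
        _ = M * (‖v x‖ * |lapl u x|) := by ring
  have hqnn : ∀ x, 0 ≤ q x := by
    intro x
    rw [hqdef]
    exact real_inner_self_nonneg
  have hi_b2 : Integrable (fun x => 1/2 * μ⁻¹ * ‖β' x‖^2 * q x) (volume.restrict Ω) := by
    apply Integrable.mono' ((hci hqc).const_mul (1/2 * μ⁻¹ * M^2))
    · exact ((((hβ'meas.norm).pow_const 2).const_mul (1/2 * μ⁻¹)).mul
        hqc.measurable).aestronglyMeasurable
    · apply Filter.Eventually.of_forall
      intro x
      have hμinv : 0 ≤ μ⁻¹ := by positivity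
      have h1 : ‖β' x‖^2 ≤ M^2 := pow_le_pow_left₀ (norm_nonneg _) (hM x) 2
      have h0 : (0:ℝ) ≤ 1/2 * μ⁻¹ * ‖β' x‖^2 * q x :=
        mul_nonneg (mul_nonneg (by positivity) (sq_nonneg _)) (hqnn x)
      rw [Real.norm_eq_abs, abs_of_nonneg h0]
      have h2 : 1/2 * μ⁻¹ * ‖β' x‖^2 * q x ≤ 1/2 * μ⁻¹ * M^2 * q x :=
        mul_le_mul_of_nonneg_right
          (mul_le_mul_of_nonneg_left h1 (by positivity)) (hqnn x)
      calc 1/2 * μ⁻¹ * ‖β' x‖^2 * q x ≤ 1/2 * μ⁻¹ * M^2 * q x := h2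
        _ = (1/2 * μ⁻¹ * M^2) * q x := by ring
  have hlhs_pt : ∀ x, ⟪βb x + β' x, v x⟫ * lapl u x
      = a x * lapl u x + ⟪β' x, v x⟫ * lapl u x := by
    intro x
    rw [inner_add_left]
    simp only [hadef]
    ring
  have hsplitL : (∫ x in Ω, ⟪βb x + β' x, v x⟫ * lapl u x)
      = (∫ x in Ω, a x * lapl u x) + ∫ x in Ω, ⟪β' x, v x⟫ * lapl u x := by
    have e1 : (∫ x in Ω, ⟪βb x + β' x, v x⟫ * lapl u x)
        = ∫ x in Ω, (a x * lapl u x + ⟪β' x, v x⟫ * lapl u x) :=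
      integral_congr_ae (Filter.Eventually.of_forall fun x => hlhs_pt x)
    rw [e1, integral_add (f := fun x => a x * lapl u x) (hci (hac.mul hΔc)) hi_bv]
  have hY1c : Continuous (fun x => P x - 1/2 * (q x * divg βb x)) :=
    hPc.sub (continuous_const.mul (hqc.mul hdivβc))
  have hsplitR : (∫ x in Ω, ⟪lamApp μ βb β' x (v x), v x⟫)
      = (∫ x in Ω, (P x - 1/2 * (q x * divg βb x)))
        + ∫ x in Ω, 1/2 * μ⁻¹ * ‖β' x‖^2 * q x := by
    have e1 : (∫ x in Ω, ⟪lamApp μ βb β' x (v x), v x⟫)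
        = ∫ x in Ω, ((P x - 1/2 * (q x * divg βb x)) + 1/2 * μ⁻¹ * ‖β' x‖^2 * q x) :=
      integral_congr_ae (Filter.Eventually.of_forall fun x => by simp only [hlam]; try ring)
    rw [e1, integral_add (hci hY1c) hi_b2]
  have hPide : (∫ x in Ω, (P x - 1/2 * (q x * divg βb x)))
      = - ∫ x in Ω, a x * lapl u x := by
    have h1 : (∫ x in Ω, DE x)
        = (∫ x in Ω, (P x - 1/2 * (q x * divg βb x))) + ∫ x in Ω, a x * lapl u x := by
      have e1 : (∫ x in Ω, DE x)
          = ∫ x in Ω, ((P x - 1/2 * (q x * divg βb x)) + a x * lapl u x) :=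
        integral_congr_ae (Filter.Eventually.of_forall fun x => by
          simp only [hDEdef]
          ring)
      rw [e1, integral_add (g := fun x => a x * lapl u x) (hci hY1c) (hci (hac.mul hΔc))]
    rw [hIDE] at h1
    linarith
  have hyoung : ∀ x, -(⟪β' x, v x⟫ * lapl u x)
      ≤ 1/2 * μ⁻¹ * ‖β' x‖^2 * q x + 1/2 * μ * (lapl u x)^2 := by
    intro x
    have hq_eq : q x = ‖v x‖^2 := by
      simp only [hqdef]
      exact real_inner_self_eq_norm_sq (v x)
    rw [hq_eq]
    exact young_ineq (μ := μ) (p := ⟪β' x, v x⟫) (nb := ‖β' x‖) (nv := ‖v x‖)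
      (t := lapl u x) hμ (abs_real_inner_le_norm _ _) (norm_nonneg _) (norm_nonneg _)
  have hIneq2 : -(∫ x in Ω, ⟪β' x, v x⟫ * lapl u x)
      ≤ (∫ x in Ω, 1/2 * μ⁻¹ * ‖β' x‖^2 * q x) + 1/2 * μ * ∫ x in Ω, (lapl u x)^2 := by
    rw [← integral_neg]
    have hint2 : Integrable (fun x => 1/2 * μ⁻¹ * ‖β' x‖^2 * q x + 1/2 * μ * (lapl u x)^2)
        (volume.restrict Ω) := hi_b2.add ((hci (hΔc.pow 2)).const_mul (1/2 * μ))
    have hmono := integral_mono hi_bv.neg hint2 (fun x => hyoung x)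
    rw [integral_add (g := fun x => 1/2 * μ * (lapl u x)^2) hi_b2 ((hci (hΔc.pow 2)).const_mul (1/2 * μ)), integral_const_mul] at hmono
    exact hmono
  rw [hsplitL, hsplitR]
  linarith [hIneq2, hPide]


end
end
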